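/- arXiv:0804.1419 — 11 statements merged into one kernel-verified Lean document; each statement's English description precedes it below -/
import Mathlib

section
/- Let a₁, a₂ be linearly independent vectors in the Euclidean plane ℝ² and let t > 0. Let s = inf{‖v‖ : v ∈ ℤ·(a₁/2) + ℤ·a₂, v ≠ 0} be the length of a shortest nonzero vector of the lattice generated by a₁/2 and a₂. Then (min s t)³ ≤ (1/√3)·|det(a₁, a₂)|·t. -/
open Real


lemma alg_step (A W I D s ε : ℝ) (hApos : 0 < A) (hsA : s ^ 2 ≤ A)
    (hAub : A ≤ (s + ε) ^ 2) (hsW : s ^ 2 ≤ W) (hI2 : I ^ 2 ≤ A ^ 2 / 4)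
    (hlag : D ^ 2 = A * W - I ^ 2) :
    s ^ 2 * s ^ 2 - (s + ε) ^ 2 * (s + ε) ^ 2 / 4 ≤ D ^ 2 := by
  nlinarith [mul_nonneg hApos.le (sub_nonneg.2 hsW),
    mul_nonneg (sub_nonneg.2 hsA) (sq_nonneg s),
    mul_nonneg (sub_nonneg.2 hAub) (by nlinarith : (0:ℝ) ≤ A + (s + ε) ^ 2)]

set_option maxHeartbeats 1600000 in
/-- Key 2D Hermite bound, in coordinates. -/
lemma hermite2 (x₁ y₁ x₂ y₂ : ℝ) (hd : x₁ * y₂ - y₁ * x₂ ≠ 0) (s : ℝ)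
    (hs : s = sInf {r : ℝ | ∃ m n : ℤ, ¬(m = 0 ∧ n = 0) ∧
      r = Real.sqrt (((m : ℝ) * x₁ + (n : ℝ) * x₂) ^ 2 + ((m : ℝ) * y₁ + (n : ℝ) * y₂) ^ 2)}) :
    s ^ 2 * Real.sqrt 3 ≤ 2 * |x₁ * y₂ - y₁ * x₂| := by
  have hne : Set.Nonempty {r : ℝ | ∃ m n : ℤ, ¬(m = 0 ∧ n = 0) ∧
      r = Real.sqrt (((m : ℝ) * x₁ + (n : ℝ) * x₂) ^ 2 + ((m : ℝ) * y₁ + (n : ℝ) * y₂) ^ 2)} :=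
    ⟨_, ⟨1, 0, by norm_num, rfl⟩⟩
  have hbdd : BddBelow {r : ℝ | ∃ m n : ℤ, ¬(m = 0 ∧ n = 0) ∧
      r = Real.sqrt (((m : ℝ) * x₁ + (n : ℝ) * x₂) ^ 2 + ((m : ℝ) * y₁ + (n : ℝ) * y₂) ^ 2)} :=
    ⟨0, fun r hr => by obtain ⟨m, n, -, rfl⟩ := hr; exact Real.sqrt_nonneg _⟩
  have hs0 : 0 ≤ s := by
    rw [hs]
    exact Real.sInf_nonneg (fun r hr => by
      obtain ⟨m, n, -, rfl⟩ := hr; exact Real.sqrt_nonneg _)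
  have hmem : ∀ m n : ℤ, ¬(m = 0 ∧ n = 0) →
      s ≤ Real.sqrt (((m : ℝ) * x₁ + (n : ℝ) * x₂) ^ 2 + ((m : ℝ) * y₁ + (n : ℝ) * y₂) ^ 2) := by
    intro m n h
    rw [hs]
    exact csInf_le hbdd ⟨m, n, h, rfl⟩
  have hpos : ∀ m n : ℤ, ¬(m = 0 ∧ n = 0) →
      0 < ((m : ℝ) * x₁ + (n : ℝ) * x₂) ^ 2 + ((m : ℝ) * y₁ + (n : ℝ) * y₂) ^ 2 := by
    intro m n h
    rcases lt_or_eq_of_le (by positivity :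
      (0:ℝ) ≤ ((m : ℝ) * x₁ + (n : ℝ) * x₂) ^ 2 + ((m : ℝ) * y₁ + (n : ℝ) * y₂) ^ 2) with h' | h'
    · exact h'
    exfalso
    have h1 : (m : ℝ) * x₁ + (n : ℝ) * x₂ = 0 := by
      nlinarith [sq_nonneg ((m : ℝ) * x₁ + (n : ℝ) * x₂), sq_nonneg ((m : ℝ) * y₁ + (n : ℝ) * y₂)]
    have h2 : (m : ℝ) * y₁ + (n : ℝ) * y₂ = 0 := by
      nlinarith [sq_nonneg ((m : ℝ) * x₁ + (n : ℝ) * x₂), sq_nonneg ((m : ℝ) * y₁ + (n : ℝ) * y₂)]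
    have hmd : (m : ℝ) * (x₁ * y₂ - y₁ * x₂) = 0 := by linear_combination y₂ * h1 - x₂ * h2
    have hnd : (n : ℝ) * (x₁ * y₂ - y₁ * x₂) = 0 := by linear_combination x₁ * h2 - y₁ * h1
    rcases not_and_or.1 h with hm | hn
    · rcases mul_eq_zero.1 hmd with h'' | h''
      · exact hm (by exact_mod_cast h'')
      · exact hd h''
    · rcases mul_eq_zero.1 hnd with h'' | h''
      · exact hn (by exact_mod_cast h'')
      · exact hd h''
  -- key epsilon estimate
  have key : ∀ ε : ℝ, 0 < ε →
      s ^ 2 * s ^ 2 - (s + ε) ^ 2 * (s + ε) ^ 2 / 4 ≤ (x₁ * y₂ - y₁ * x₂) ^ 2 := by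
    intro ε hε
    obtain ⟨r, hrS, hrlt⟩ := Real.lt_sInf_add_pos hne hε
    rw [← hs] at hrlt
    obtain ⟨m, n, hmn, rfl⟩ := hrS
    have hmn' : m ≠ 0 ∨ n ≠ 0 := not_and_or.1 hmn
    have hGpos : 0 < Int.gcd m n := Int.gcd_pos_iff.2 hmn'
    obtain ⟨g, m', n', hg, hgcd1, hm', hn'⟩ := Int.exists_gcd_one' hGpos
    have hcop : IsCoprime m' n' := Int.isCoprime_iff_gcd_eq_one.2 hgcd1
    have hmn'' : ¬(m' = 0 ∧ n' = 0) := by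
      rintro ⟨rfl, rfl⟩
      simp at hgcd1
    set vx : ℝ := (m' : ℝ) * x₁ + (n' : ℝ) * x₂ with hvx
    set vy : ℝ := (m' : ℝ) * y₁ + (n' : ℝ) * y₂ with hvy
    have hApos : 0 < vx ^ 2 + vy ^ 2 := hpos m' n' hmn''
    have hG1 : (1 : ℝ) ≤ (g : ℝ) := by exact_mod_cast hg
    have hvlt : Real.sqrt (vx ^ 2 + vy ^ 2) < s + ε := by
      refine lt_of_le_of_lt ?_ hrlt
      apply Real.sqrt_le_sqrt
      have hQ : ((m : ℝ) * x₁ + (n : ℝ) * x₂) ^ 2 + ((m : ℝ) * y₁ + (n : ℝ) * y₂) ^ 2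
          = (g : ℝ) ^ 2 * (vx ^ 2 + vy ^ 2) := by
        rw [hvx, hvy, hm', hn']; push_cast; ring
      rw [hQ]
      nlinarith [mul_nonneg (mul_nonneg (sub_nonneg.2 hG1)
        (by positivity : (0:ℝ) ≤ (g : ℝ) + 1)) hApos.le]
    have hvs : s ≤ Real.sqrt (vx ^ 2 + vy ^ 2) := hmem m' n' hmn''
    -- Bezout
    obtain ⟨a, b, hab⟩ := hcop
    have hdet : m' * a - n' * (-b) = 1 := by linarith [hab]
    set p : ℤ := -b with hp
    set q : ℤ := a with hq
    set wx : ℝ := (p : ℝ) * x₁ + (q : ℝ) * x₂ with hwx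
    set wy : ℝ := (p : ℝ) * y₁ + (q : ℝ) * y₂ with hwy
    set A : ℝ := vx ^ 2 + vy ^ 2 with hA
    set k : ℤ := round ((vx * wx + vy * wy) / A) with hk
    have hcoeff : ¬(p - k * m' = 0 ∧ q - k * n' = 0) := by
      rintro ⟨h1, h2⟩
      have hp' : p = k * m' := by omega
      have hq' : q = k * n' := by omega
      rw [hq', hp'] at hdet
      nlinarith [hdet]
    have hw : s ≤ Real.sqrt ((wx - (k:ℝ) * vx) ^ 2 + (wy - (k:ℝ) * vy) ^ 2) := by
      have h := hmem (p - k * m') (q - k * n') hcoeff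
      have hx : ((p - k * m' : ℤ) : ℝ) * x₁ + ((q - k * n' : ℤ) : ℝ) * x₂ = wx - (k:ℝ) * vx := by
        rw [hwx, hvx]; push_cast; ring
      have hy : ((p - k * m' : ℤ) : ℝ) * y₁ + ((q - k * n' : ℤ) : ℝ) * y₂ = wy - (k:ℝ) * vy := by
        rw [hwy, hvy]; push_cast; ring
      rwa [hx, hy] at h
    set W : ℝ := (wx - (k:ℝ) * vx) ^ 2 + (wy - (k:ℝ) * vy) ^ 2 with hW
    have hWnn : 0 ≤ W := by positivity
    have hsW : s ^ 2 ≤ W := (Real.le_sqrt hs0 hWnn).1 hw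
    have hsA : s ^ 2 ≤ A := (Real.le_sqrt hs0 hApos.le).1 hvs
    have hAub : A ≤ (s + ε) ^ 2 :=
      ((Real.sqrt_lt' (by linarith)).1 hvlt).le
    set I : ℝ := vx * (wx - (k:ℝ) * vx) + vy * (wy - (k:ℝ) * vy) with hI
    have hIle : |I| ≤ A / 2 := by
      have h1 : |(vx * wx + vy * wy) / A - (k : ℝ)| ≤ 1 / 2 := abs_sub_round _
      have h2 : I = ((vx * wx + vy * wy) / A - (k : ℝ)) * A := by
        rw [sub_mul, div_mul_cancel₀ _ hApos.ne', hI, hA]; ring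
      rw [h2, abs_mul, abs_of_pos hApos]
      have := mul_le_mul_of_nonneg_right h1 hApos.le
      linarith
    clear_value I W k A wx wy vx vy
    have hdet2 : vx * (wy - (k:ℝ) * vy) - vy * (wx - (k:ℝ) * vx) = x₁ * y₂ - y₁ * x₂ := by
      have hcast : (m' : ℝ) * (q : ℝ) - (n' : ℝ) * (p : ℝ) = 1 := by exact_mod_cast hdet
      rw [hvx, hvy, hwx, hwy]
      linear_combination (x₁ * y₂ - y₁ * x₂) * hcast
    have hlag : (x₁ * y₂ - y₁ * x₂) ^ 2 = A * W - I ^ 2 := by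
      rw [← hdet2, hA, hW, hI]; ring
    have hI2 : I ^ 2 ≤ A ^ 2 / 4 := by
      have h4 := abs_le.1 hIle
      nlinarith [h4.1, h4.2, hApos.le]
    exact alg_step A W I _ s ε hApos hsA hAub hsW hI2 hlag
  -- pass to the limit ε → 0⁺
  have hlim : s ^ 2 * s ^ 2 * (3 / 4) ≤ (x₁ * y₂ - y₁ * x₂) ^ 2 := by
    have hcont : Continuous fun ε : ℝ => s ^ 2 * s ^ 2 - (s + ε) ^ 2 * (s + ε) ^ 2 / 4 := by
      continuity
    have htend : Filter.Tendsto (fun ε : ℝ => s ^ 2 * s ^ 2 - (s + ε) ^ 2 * (s + ε) ^ 2 / 4)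
        (nhdsWithin 0 (Set.Ioi 0)) (nhds (s ^ 2 * s ^ 2 * (3 / 4))) := by
      have h := (hcont.tendsto 0).mono_left (nhdsWithin_le_nhds (s := Set.Ioi (0:ℝ)))
      convert h using 2
      ring
    exact le_of_tendsto htend (by
      filter_upwards [self_mem_nhdsWithin] with ε hε
      exact key ε hε)
  -- conclude
  have h3 : (0:ℝ) < Real.sqrt 3 := Real.sqrt_pos.2 (by norm_num)
  have hsq : (s ^ 2 * Real.sqrt 3) ^ 2 ≤ (2 * |x₁ * y₂ - y₁ * x₂|) ^ 2 := by
    rw [mul_pow, Real.sq_sqrt (by norm_num : (0:ℝ) ≤ 3), mul_pow, sq_abs]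
    nlinarith [hlim]
  exact le_of_pow_le_pow_left₀ two_ne_zero (by positivity) hsq

lemma det_ne_zero (a₁ a₂ : EuclideanSpace ℝ (Fin 2))
    (hind : LinearIndependent ℝ ![a₁, a₂]) :
    a₁ 0 * a₂ 1 - a₁ 1 * a₂ 0 ≠ 0 := by
  rw [LinearIndependent.pair_iff] at hind
  intro hD
  have comb : ∀ c₁ c₂ : ℝ, c₁ * a₁ 0 + c₂ * a₂ 0 = 0 → c₁ * a₁ 1 + c₂ * a₂ 1 = 0 →
      c₁ = 0 ∧ c₂ = 0 := by
    intro c₁ c₂ h0 h1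
    refine hind c₁ c₂ ?_
    ext i
    fin_cases i <;> simp [PiLp.add_apply, PiLp.smul_apply, smul_eq_mul] <;> assumption
  by_cases h0 : a₁ 0 = 0 ∧ a₂ 0 = 0
  · by_cases h1 : a₁ 1 = 0 ∧ a₂ 1 = 0
    · have := comb 1 0 (by rw [h0.1]; ring) (by rw [h1.1]; ring)
      norm_num at this
    · have := comb (a₂ 1) (-(a₁ 1)) (by rw [h0.1, h0.2]; ring) (by ring)
      rcases this with ⟨hc1, hc2⟩
      exact h1 ⟨by linarith [hc2, neg_eq_zero.1 hc2], hc1⟩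
  · have := comb (a₂ 0) (-(a₁ 0)) (by ring) (by linear_combination -hD)
    rcases this with ⟨hc1, hc2⟩
    exact h0 ⟨neg_eq_zero.1 hc2, hc1⟩

/-- Flat systolic estimate for type `B₁` Bieberbach 3-manifolds:
if `a₁, a₂` are linearly independent plane vectors, `t > 0`, and `s` is the
length of a shortest nonzero vector of the lattice generated by `a₁/2` and `a₂`,
then `(min s t)³ ≤ (1/√3)·|det(a₁,a₂)|·t`. -/
theorem stmt0 (a₁ a₂ : EuclideanSpace ℝ (Fin 2))
    (hind : LinearIndependent ℝ ![a₁, a₂]) (t : ℝ) (ht : 0 < t)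
    (s : ℝ)
    (hs : s = sInf {r : ℝ | ∃ m n : ℤ,
      m • ((2:ℝ)⁻¹ • a₁) + n • a₂ ≠ 0 ∧ r = ‖m • ((2:ℝ)⁻¹ • a₁) + n • a₂‖}) :
    (min s t) ^ 3 ≤ (1 / Real.sqrt 3) * |a₁ 0 * a₂ 1 - a₁ 1 * a₂ 0| * t := by
  have hD : a₁ 0 * a₂ 1 - a₁ 1 * a₂ 0 ≠ 0 := det_ne_zero a₁ a₂ hind
  set x₁ : ℝ := (2:ℝ)⁻¹ * a₁ 0 with hx₁
  set y₁ : ℝ := (2:ℝ)⁻¹ * a₁ 1 with hy₁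
  set x₂ : ℝ := a₂ 0 with hx₂
  set y₂ : ℝ := a₂ 1 with hy₂
  have hd : x₁ * y₂ - y₁ * x₂ ≠ 0 := by
    rw [hx₁, hy₁, hx₂, hy₂]
    intro h
    exact hD (by linear_combination 2 * h)
  have hnorm : ∀ m n : ℤ, ‖m • ((2:ℝ)⁻¹ • a₁) + n • a₂‖
      = Real.sqrt (((m:ℝ) * x₁ + (n:ℝ) * x₂) ^ 2 + ((m:ℝ) * y₁ + (n:ℝ) * y₂) ^ 2) := by
    intro m n
    rw [EuclideanSpace.norm_eq]
    rw [hx₁, hy₁, hx₂, hy₂]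
    simp [Fin.sum_univ_two, Real.norm_eq_abs, sq_abs, PiLp.add_apply, PiLp.smul_apply,
      smul_eq_mul]
  have hzero : ∀ m n : ℤ, (m • ((2:ℝ)⁻¹ • a₁) + n • a₂ ≠ 0) ↔ ¬(m = 0 ∧ n = 0) := by
    intro m n
    constructor
    · intro hv hc
      rcases hc with ⟨rfl, rfl⟩
      simp at hv
    · intro hc hv
      have h0 : (m:ℝ) * x₁ + (n:ℝ) * x₂ = 0 := by
        have := congrArg (fun v : EuclideanSpace ℝ (Fin 2) => v 0) hv
        rw [hx₁, hx₂]
        simpa [PiLp.add_apply, PiLp.smul_apply, smul_eq_mul] using this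
      have h1 : (m:ℝ) * y₁ + (n:ℝ) * y₂ = 0 := by
        have := congrArg (fun v : EuclideanSpace ℝ (Fin 2) => v 1) hv
        rw [hy₁, hy₂]
        simpa [PiLp.add_apply, PiLp.smul_apply, smul_eq_mul] using this
      have hmd : (m : ℝ) * (x₁ * y₂ - y₁ * x₂) = 0 := by linear_combination y₂ * h0 - x₂ * h1
      have hnd : (n : ℝ) * (x₁ * y₂ - y₁ * x₂) = 0 := by linear_combination x₁ * h1 - y₁ * h0
      rcases not_and_or.1 hc with hm | hn
      · rcases mul_eq_zero.1 hmd with h'' | h''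
        · exact hm (by exact_mod_cast h'')
        · exact hd h''
      · rcases mul_eq_zero.1 hnd with h'' | h''
        · exact hn (by exact_mod_cast h'')
        · exact hd h''
  have hset : {r : ℝ | ∃ m n : ℤ,
      m • ((2:ℝ)⁻¹ • a₁) + n • a₂ ≠ 0 ∧ r = ‖m • ((2:ℝ)⁻¹ • a₁) + n • a₂‖}
      = {r : ℝ | ∃ m n : ℤ, ¬(m = 0 ∧ n = 0) ∧
        r = Real.sqrt (((m : ℝ) * x₁ + (n : ℝ) * x₂) ^ 2 + ((m : ℝ) * y₁ + (n : ℝ) * y₂) ^ 2)} := by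
    ext r
    constructor
    · rintro ⟨m, n, hv, rfl⟩
      exact ⟨m, n, (hzero m n).1 hv, hnorm m n⟩
    · rintro ⟨m, n, hmn, rfl⟩
      exact ⟨m, n, (hzero m n).2 hmn, (hnorm m n).symm⟩
  rw [hset] at hs
  have hcore := hermite2 x₁ y₁ x₂ y₂ hd s hs
  have habs : |x₁ * y₂ - y₁ * x₂| = |a₁ 0 * a₂ 1 - a₁ 1 * a₂ 0| / 2 := by
    rw [hx₁, hy₁, hx₂, hy₂, show (2:ℝ)⁻¹ * a₁ 0 * a₂ 1 - (2:ℝ)⁻¹ * a₁ 1 * a₂ 0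
      = (a₁ 0 * a₂ 1 - a₁ 1 * a₂ 0) / 2 by ring, abs_div]
    norm_num
  rw [habs] at hcore
  -- hcore : s ^ 2 * √3 ≤ 2 * (|D| / 2) = |D|
  have hs0 : 0 ≤ s := by
    rw [hs]
    exact Real.sInf_nonneg (fun r hr => by
      obtain ⟨m, n, -, rfl⟩ := hr; exact Real.sqrt_nonneg _)
  have h3 : (0:ℝ) < Real.sqrt 3 := Real.sqrt_pos.2 (by norm_num)
  have hmin0 : 0 ≤ min s t := le_min hs0 ht.le
  have hmins : min s t ≤ s := min_le_left s t
  have hmint : min s t ≤ t := min_le_right s t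
  have hs2 : s ^ 2 ≤ 1 / Real.sqrt 3 * |a₁ 0 * a₂ 1 - a₁ 1 * a₂ 0| := by
    rw [div_mul_eq_mul_div, one_mul, le_div_iff₀ h3]
    linarith [hcore]
  have hstep : (min s t) ^ 3 ≤ s ^ 2 * t := by
    have h1 : (min s t) ^ 2 ≤ s ^ 2 := by nlinarith
    calc (min s t) ^ 3 = (min s t) ^ 2 * (min s t) := by ring
      _ ≤ s ^ 2 * t := by
          apply mul_le_mul h1 hmint hmin0 (sq_nonneg s)
  calc (min s t) ^ 3 ≤ s ^ 2 * t := hstep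
    _ ≤ 1 / Real.sqrt 3 * |a₁ 0 * a₂ 1 - a₁ 1 * a₂ 0| * t :=
        mul_le_mul_of_nonneg_right hs2 ht.le
end

section
/- Let a₁, a₂ be vectors in the Euclidean plane ℝ² with ‖a₁‖ = 2‖a₂‖ = 2t for some t > 0 and with inner product ⟪a₁, a₂⟫ = ‖a₁‖·‖a₂‖/2 (i.e. the angle between a₁ and a₂ is π/3). Let s = inf{‖v‖ : v ∈ ℤ·(a₁/2) + ℤ·a₂, v ≠ 0}. Then s = t and (min s t)³ = (1/√3)·|det(a₁, a₂)|·t. -/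
open Real

lemma int_quad_ge (m n : ℤ) (h : ¬(m = 0 ∧ n = 0)) : 1 ≤ m^2 + m*n + n^2 := by
  rcases eq_or_ne n 0 with hn | hn
  · subst hn
    have hm : m ≠ 0 := by tauto
    have h1 : 1 ≤ |m| := Int.one_le_abs hm
    nlinarith [sq_abs m]
  · have h1 : 1 ≤ |n| := Int.one_le_abs hn
    have h2 : 1 ≤ n^2 := by nlinarith [sq_abs n]
    have h3 : 3 ≤ 4 * (m^2 + m*n + n^2) := by nlinarith [sq_nonneg (2*m + n)]
    omega

/-- Equality case of the flat systolic estimate for type `B₁`: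
if `‖a₁‖ = 2‖a₂‖ = 2t` and the angle between `a₁` and `a₂` is `π/3`
(i.e. `⟪a₁,a₂⟫ = ‖a₁‖‖a₂‖/2`), then the shortest nonzero vector of the lattice
generated by `a₁/2` and `a₂` has length `t` and `(min s t)³ = (1/√3)·|det(a₁,a₂)|·t`. -/
theorem stmt1 (a₁ a₂ : EuclideanSpace ℝ (Fin 2)) (t : ℝ) (ht : 0 < t)
    (h₁ : ‖a₁‖ = 2 * t) (h₂ : ‖a₂‖ = t)
    (hangle : (inner ℝ a₁ a₂ : ℝ) = ‖a₁‖ * ‖a₂‖ / 2)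
    (s : ℝ)
    (hs : s = sInf {r : ℝ | ∃ m n : ℤ,
      m • ((2:ℝ)⁻¹ • a₁) + n • a₂ ≠ 0 ∧ r = ‖m • ((2:ℝ)⁻¹ • a₁) + n • a₂‖}) :
    s = t ∧ (min s t) ^ 3 = (1 / Real.sqrt 3) * |a₁ 0 * a₂ 1 - a₁ 1 * a₂ 0| * t := by
  have hinn : (inner ℝ a₁ a₂ : ℝ) = t^2 := by rw [hangle, h₁, h₂]; ring
  set b : EuclideanSpace ℝ (Fin 2) := (2:ℝ)⁻¹ • a₁ with hbdef
  have hb : ‖b‖ = t := by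
    rw [hbdef, norm_smul, h₁]
    simp only [norm_inv, Real.norm_ofNat]
    ring
  have hbne : b ≠ 0 := by
    intro h
    rw [h, norm_zero] at hb
    linarith
  have hinnb : (inner ℝ b a₂ : ℝ) = t^2/2 := by
    rw [hbdef, real_inner_smul_left, hinn]; ring
  have key : ∀ m n : ℤ, ‖m • b + n • a₂‖^2 = ((m:ℝ)^2 + m*n + n^2) * t^2 := by
    intro m n
    rw [← Int.cast_smul_eq_zsmul ℝ m b, ← Int.cast_smul_eq_zsmul ℝ n a₂,
        @norm_add_sq_real, norm_smul ((m:ℝ)) b, norm_smul ((n:ℝ)) a₂, real_inner_smul_left,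
        real_inner_smul_right, hinnb, hb, h₂]
    simp only [Real.norm_eq_abs, mul_pow, sq_abs]
    ring
  have hmem : t ∈ {r : ℝ | ∃ m n : ℤ,
      m • b + n • a₂ ≠ 0 ∧ r = ‖m • b + n • a₂‖} :=
    ⟨1, 0, by simpa using hbne, by simp [hb]⟩
  have hst : s = t := by
    rw [hs]
    apply le_antisymm
    · refine csInf_le ⟨0, ?_⟩ hmem
      rintro r ⟨m, n, _, rfl⟩
      positivity
    · apply le_csInf ⟨t, hmem⟩
      rintro r ⟨m, n, hne, rfl⟩
      have hmn : ¬(m = 0 ∧ n = 0) := by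
        rintro ⟨rfl, rfl⟩
        simp at hne
      have h1 : (1:ℝ) ≤ (m:ℝ)^2 + m*n + n^2 := by
        have := int_quad_ge m n hmn
        have : (1:ℝ) ≤ ((m^2 + m*n + n^2 : ℤ) : ℝ) := by exact_mod_cast this
        push_cast at this
        linarith
      have h2 := key m n
      nlinarith [norm_nonneg (m • b + n • a₂)]
  refine ⟨hst, ?_⟩
  -- determinant computation
  have hn1 : a₁ 0 ^ 2 + a₁ 1 ^ 2 = (2*t)^2 := by
    have := real_inner_self_eq_norm_sq a₁
    rw [h₁] at this
    rw [← this, PiLp.inner_apply]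
    simp [Fin.sum_univ_two, RCLike.inner_apply]
    try ring
  have hn2 : a₂ 0 ^ 2 + a₂ 1 ^ 2 = t^2 := by
    have := real_inner_self_eq_norm_sq a₂
    rw [h₂] at this
    rw [← this, PiLp.inner_apply]
    simp [Fin.sum_univ_two, RCLike.inner_apply]
    try ring
  have hi12 : a₁ 0 * a₂ 0 + a₁ 1 * a₂ 1 = t^2 := by
    rw [← hinn, PiLp.inner_apply]
    simp [Fin.sum_univ_two, RCLike.inner_apply]
    try ring
  have hd2 : (a₁ 0 * a₂ 1 - a₁ 1 * a₂ 0)^2 = 3 * t^4 := by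
    have : (a₁ 0 * a₂ 1 - a₁ 1 * a₂ 0)^2 =
        (a₁ 0 ^ 2 + a₁ 1 ^ 2) * (a₂ 0 ^ 2 + a₂ 1 ^ 2)
          - (a₁ 0 * a₂ 0 + a₁ 1 * a₂ 1)^2 := by ring
    rw [this, hn1, hn2, hi12]; ring
  have habs : |a₁ 0 * a₂ 1 - a₁ 1 * a₂ 0| = Real.sqrt 3 * t^2 := by
    rw [← Real.sqrt_sq_eq_abs, hd2,
        show (3:ℝ) * t^4 = 3 * (t^2)^2 by ring,
        Real.sqrt_mul (by norm_num), Real.sqrt_sq (by positivity)]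
  rw [hst, min_self, habs]
  have h3 : Real.sqrt 3 ≠ 0 := by positivity
  field_simp
end

section
/- Let a₁, a₂ be linearly independent vectors in the Euclidean plane ℝ² and let d > 0. Let L = ℤ·a₁ + ℤ·a₂, let m(w) = inf{‖w − v‖ : v ∈ L} denote the distance from a point w ∈ ℝ² to L, and let s(L) = inf{‖v‖ : v ∈ L, v ≠ 0}. Set σ = min{ m(a₁/2), m(a₂/2), 4d, √(m((a₁+a₂)/2)² + 4d²), s(L) }. Then σ³ ≤ (8/√39)·|det(a₁, a₂)|·d. -/
open Real

set_option maxHeartbeats 1000000 in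
private lemma aux_small' (σ S2 N2 P D t d : ℝ) (hσ : 0 < σ) (h1 : σ^2 ≤ S2)
    (h2 : S2 ≤ 4*σ^2) (h3 : 4*σ^2 ≤ N2) (hP : P^2 ≤ S2^2/4)
    (hid : P^2 + D^2 = S2*N2) (ht0 : 0 ≤ t) (ht : t^2 ≤ S2/4)
    (hB : σ^2 ≤ t^2 + 4*d^2) (hd4 : σ ≤ 4*d) (hd0 : 0 < d) (hD : 0 ≤ D) :
    39*σ^6 ≤ 64*(D*d)^2 := by
  have hσ2 : 0 < σ^2 := by positivity
  have hS2pos : 0 < S2 := lt_of_lt_of_le hσ2 h1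
  have ha1 : S2*(4*σ^2) ≤ S2*N2 := mul_le_mul_of_nonneg_left h3 hS2pos.le
  have hD2 : S2*(16*σ^2 - S2)/4 ≤ D^2 := by linarith
  have egoal : 64*(D*d)^2 = 64*(D^2*d^2) := by ring
  rw [egoal]
  rcases le_or_gt S2 (3*σ^2) with h | h
  · have hd2 : (4*σ^2 - S2)/16 ≤ d^2 := by linarith
    have hq : 0 ≤ 17*S2*σ^2 - 13*σ^4 - S2^2 := by
      have k := mul_nonneg (sub_nonneg.2 h1) (sub_nonneg.2 h)
      have k2 : σ^2*σ^2 ≤ S2*σ^2 := mul_le_mul_of_nonneg_right h1 (sq_nonneg σ)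
      nlinarith [k, k2]
    have key := mul_nonneg (sub_nonneg.2 h) hq
    have e : S2*(16*σ^2-S2)*(4*σ^2-S2) = 39*σ^6 + (3*σ^2-S2)*(17*S2*σ^2-13*σ^4-S2^2) := by ring
    have hcub : 39*σ^6 ≤ S2*(16*σ^2-S2)*(4*σ^2-S2) := by linarith
    have h5 : (0:ℝ) ≤ (4*σ^2 - S2)/16 := by linarith
    have h6 : (0:ℝ) ≤ S2*(16*σ^2 - S2)/4 := by nlinarith [mul_pos hS2pos hσ2]
    have hm := mul_le_mul hD2 hd2 h5 (sq_nonneg D)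
    have e2 : S2*(16*σ^2 - S2)/4 * ((4*σ^2 - S2)/16) = S2*(16*σ^2-S2)*(4*σ^2-S2)/64 := by ring
    linarith
  · have hd2 : σ^2/16 ≤ d^2 := by nlinarith
    have key := mul_nonneg (sub_nonneg.2 h.le) (sub_nonneg.2 h2)
    have k2 : 3*(σ^2*σ^2) ≤ S2*σ^2 := by nlinarith [mul_le_mul_of_nonneg_right h.le (sq_nonneg σ)]
    have hcub : 39*σ^4 ≤ S2*(16*σ^2 - S2) := by nlinarith [key, k2]
    have h6 : (0:ℝ) ≤ S2*(16*σ^2 - S2)/4 := by nlinarith [mul_pos hS2pos hσ2]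
    have hm := mul_le_mul hD2 hd2 (by positivity) (sq_nonneg D)
    have k3 := mul_le_mul_of_nonneg_right hcub (sq_nonneg σ)
    have e2 : S2*(16*σ^2 - S2)/4 * (σ^2/16) = S2*(16*σ^2-S2)*σ^2/64 := by ring
    have e3 : (39*σ^4)*σ^2 = 39*σ^6 := by ring
    linarith

set_option maxHeartbeats 1000000 in
private lemma aux_large' (σ s S2 N2 P D d : ℝ) (hσ : 0 < σ) (hs : σ ≤ s)
    (h2 : 4*σ^2 ≤ S2) (h3 : S2 ≤ (s + σ/100)^2) (h4 : s^2 ≤ N2)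
    (hP : P^2 ≤ S2^2/4) (hid : P^2 + D^2 = S2*N2)
    (hd4 : σ ≤ 4*d) (hd0 : 0 < d) (hD : 0 ≤ D) :
    39*σ^6 ≤ 64*(D*d)^2 := by
  have hσ2 : 0 < σ^2 := by positivity
  have hS2pos : 0 < S2 := lt_of_lt_of_le (by positivity) h2
  have hsb : 199*σ ≤ 100*s := by
    nlinarith [sq_nonneg (100*(s + σ/100) - 200*σ), mul_pos hσ (lt_of_lt_of_le hσ hs)]
  have hd2 : σ^2/16 ≤ d^2 := by nlinarith
  have ha1 : S2*s^2 ≤ S2*N2 := mul_le_mul_of_nonneg_left h4 hS2pos.le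
  have hD2 : S2*s^2 - S2^2/4 ≤ D^2 := by linarith
  have hc : 0 ≤ 3/4*s^2 - s*σ/200 - (1+1/40000)*σ^2 := by
    nlinarith [sq_nonneg (100*s - 199*σ), mul_nonneg (sub_nonneg.2 hsb) hσ.le]
  have k1 : 0 ≤ (S2 - 4*σ^2)*((s+σ/100)^2 - S2) :=
    mul_nonneg (by linarith) (by linarith)
  have k2 := mul_le_mul_of_nonneg_right h2 hc
  have k3 : σ^2*((199*σ)*(199*σ)) ≤ σ^2*((100*s)*(100*s)) := by
    have hh : (199*σ)*(199*σ) ≤ (100*s)*(100*s) :=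
      mul_le_mul hsb hsb (by linarith) (by linarith)
    exact mul_le_mul_of_nonneg_left hh (sq_nonneg σ)
  have hlow : 39*σ^4/4 ≤ S2*s^2 - S2^2/4 := by nlinarith [k1, k2, k3]
  have hm := mul_le_mul (hlow.trans hD2) hd2 (by positivity) (sq_nonneg D)
  nlinarith [hm]

private lemma aux_conv' (σ D d : ℝ) (hσ : 0 < σ) (hD : 0 ≤ D) (hd : 0 < d)
    (h : 39*σ^6 ≤ 64*(D*d)^2) : σ^3 ≤ (8 / Real.sqrt 39) * D * d := by
  have h39 : (0:ℝ) < Real.sqrt 39 := Real.sqrt_pos.2 (by norm_num)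
  have hsq : (Real.sqrt 39)^2 = 39 := Real.sq_sqrt (by norm_num)
  rw [div_mul_eq_mul_div, div_mul_eq_mul_div, le_div_iff₀ h39]
  have hL : 0 ≤ σ^3 * Real.sqrt 39 := by positivity
  have hR : 0 ≤ 8 * D * d := by positivity
  nlinarith [sq_nonneg (σ^3 * Real.sqrt 39 - 8*D*d), hsq, mul_pos hσ hσ]

set_option maxHeartbeats 2000000 in
/-- Flat systolic estimate for type `B₂` Bieberbach 3-manifolds:
with `L = ℤa₁ + ℤa₂`, `m(w)` the distance from `w` to `L`, `s(L)` the length of a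
shortest nonzero lattice vector, and
`σ = min{m(a₁/2), m(a₂/2), 4d, √(m((a₁+a₂)/2)² + 4d²), s(L)}`,
one has `σ³ ≤ (8/√39)·|det(a₁,a₂)|·d`. -/
theorem stmt3 (a₁ a₂ : EuclideanSpace ℝ (Fin 2))
    (hind : LinearIndependent ℝ ![a₁, a₂]) (d : ℝ) (hd : 0 < d)
    (m : EuclideanSpace ℝ (Fin 2) → ℝ)
    (hm : ∀ w, m w = sInf {r : ℝ | ∃ p q : ℤ, r = ‖w - (p • a₁ + q • a₂)‖})
    (s : ℝ)
    (hs : s = sInf {r : ℝ | ∃ p q : ℤ,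
      p • a₁ + q • a₂ ≠ 0 ∧ r = ‖p • a₁ + q • a₂‖})
    (σ : ℝ)
    (hσ : σ = min (m ((2:ℝ)⁻¹ • a₁))
      (min (m ((2:ℝ)⁻¹ • a₂))
        (min (4 * d)
          (min (Real.sqrt (m ((2:ℝ)⁻¹ • (a₁ + a₂)) ^ 2 + 4 * d ^ 2)) s)))) :
    σ ^ 3 ≤ (8 / Real.sqrt 39) * |a₁ 0 * a₂ 1 - a₁ 1 * a₂ 0| * d := by
  rcases le_or_gt σ 0 with hσ0 | hσpos
  · have h3 : σ^3 ≤ 0 := by nlinarith [sq_nonneg σ]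
    have hR : 0 ≤ (8 / Real.sqrt 39) * |a₁ 0 * a₂ 1 - a₁ 1 * a₂ 0| * d :=
      mul_nonneg (mul_nonneg (by positivity) (abs_nonneg _)) hd.le
    linarith
  -- basic component lemmas
  have hn : ∀ w : EuclideanSpace ℝ (Fin 2), ‖w‖^2 = w 0^2 + w 1^2 := by
    intro w
    rw [EuclideanSpace.norm_eq, Real.sq_sqrt (by positivity)]
    simp [Fin.sum_univ_two, sq_abs]
  have hpair : ∀ x y : ℝ, x • a₁ + y • a₂ = 0 → x = 0 ∧ y = 0 :=
    LinearIndependent.pair_iff.mp hind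
  have hzsmul : ∀ (p q : ℤ), (p • a₁ + q • a₂ : EuclideanSpace ℝ (Fin 2))
      = ((p:ℝ) • a₁ + (q:ℝ) • a₂ : EuclideanSpace ℝ (Fin 2)) := by
    intro p q
    rw [Int.cast_smul_eq_zsmul, Int.cast_smul_eq_zsmul]
  have hzero : ∀ p q : ℤ, (p • a₁ + q • a₂ : EuclideanSpace ℝ (Fin 2)) = 0 → p = 0 ∧ q = 0 := by
    intro p q h
    rw [hzsmul] at h
    obtain ⟨h1, h2⟩ := hpair _ _ h
    exact ⟨by exact_mod_cast h1, by exact_mod_cast h2⟩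
  -- extract the five bounds from hσ
  have hσ1 : σ ≤ m ((2:ℝ)⁻¹ • a₁) := by rw [hσ]; exact min_le_left _ _
  have hσ2 : σ ≤ m ((2:ℝ)⁻¹ • a₂) := by
    rw [hσ]; exact le_trans (min_le_right _ _) (min_le_left _ _)
  have hσ4d : σ ≤ 4 * d := by
    rw [hσ]
    exact le_trans (min_le_right _ _) (le_trans (min_le_right _ _) (min_le_left _ _))
  have hσsq : σ ≤ Real.sqrt (m ((2:ℝ)⁻¹ • (a₁ + a₂)) ^ 2 + 4 * d ^ 2) := by
    rw [hσ]
    exact le_trans (min_le_right _ _) (le_trans (min_le_right _ _)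
      (le_trans (min_le_right _ _) (min_le_left _ _)))
  have hσs : σ ≤ s := by
    rw [hσ]
    exact le_trans (min_le_right _ _) (le_trans (min_le_right _ _)
      (le_trans (min_le_right _ _) (min_le_right _ _)))
  -- m bounds
  have hmub : ∀ (w : EuclideanSpace ℝ (Fin 2)) (p q : ℤ),
      m w ≤ ‖w - (p • a₁ + q • a₂)‖ := by
    intro w p q
    rw [hm w]
    exact csInf_le ⟨0, by rintro r ⟨p', q', rfl⟩; exact norm_nonneg _⟩ ⟨p, q, rfl⟩
  have hm0 : ∀ w : EuclideanSpace ℝ (Fin 2), 0 ≤ m w := by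
    intro w
    rw [hm w]
    exact le_csInf ⟨_, 0, 0, rfl⟩ (by rintro r ⟨p', q', rfl⟩; exact norm_nonneg _)
  -- s bounds
  have hT : {r : ℝ | ∃ p q : ℤ, p • a₁ + q • a₂ ≠ 0 ∧ r = ‖p • a₁ + q • a₂‖}.Nonempty := by
    refine ⟨‖(1:ℤ) • a₁ + (0:ℤ) • a₂‖, 1, 0, ?_, rfl⟩
    intro h
    obtain ⟨h1, -⟩ := hzero 1 0 h
    norm_num at h1
  have hTbdd : BddBelow {r : ℝ | ∃ p q : ℤ, p • a₁ + q • a₂ ≠ 0 ∧ r = ‖p • a₁ + q • a₂‖} :=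
    ⟨0, by rintro r ⟨p', q', -, rfl⟩; exact norm_nonneg _⟩
  have hslb : ∀ p q : ℤ, (p • a₁ + q • a₂ : EuclideanSpace ℝ (Fin 2)) ≠ 0 →
      s ≤ ‖p • a₁ + q • a₂‖ := by
    intro p q hne
    rw [hs]
    exact csInf_le hTbdd ⟨p, q, hne, rfl⟩
  -- near-minimizer
  have hex : ∃ r ∈ {r : ℝ | ∃ p q : ℤ, p • a₁ + q • a₂ ≠ 0 ∧ r = ‖p • a₁ + q • a₂‖},
      r < s + σ/100 := by
    apply exists_lt_of_csInf_lt hT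
    rw [← hs]; linarith
  obtain ⟨r, ⟨p, q, hvne, rfl⟩, hrlt⟩ := hex
  have happ : ∀ (p' q' : ℤ) (i : Fin 2), (p' • a₁ + q' • a₂ : EuclideanSpace ℝ (Fin 2)) i
      = (p':ℝ) * a₁ i + (q':ℝ) * a₂ i := by
    intro p' q' i
    simp [PiLp.add_apply, PiLp.smul_apply]
  have hsS : s ≤ ‖p • a₁ + q • a₂‖ := hslb p q hvne
  have hspos : 0 < s := lt_of_lt_of_le hσpos hσs
  -- gcd p q = 1
  have hg1 : Int.gcd p q = 1 := by
    by_contra hg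
    have hg0 : Int.gcd p q ≠ 0 := by
      intro h0
      obtain ⟨e1, e2⟩ := Int.gcd_eq_zero_iff.mp h0
      exact hvne (by rw [e1, e2]; simp)
    have hg2 : 2 ≤ Int.gcd p q := by omega
    obtain ⟨p₁, hp₁⟩ := (Int.gcd_dvd_left p q : ((Int.gcd p q : ℤ)) ∣ p)
    obtain ⟨q₁, hq₁⟩ := (Int.gcd_dvd_right p q : ((Int.gcd p q : ℤ)) ∣ q)
    have hwne : (p₁ • a₁ + q₁ • a₂ : EuclideanSpace ℝ (Fin 2)) ≠ 0 := by
      intro h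
      obtain ⟨e1, e2⟩ := hzero _ _ h
      exact hvne (by rw [hp₁, hq₁, e1, e2]; simp)
    have hveq : (p • a₁ + q • a₂ : EuclideanSpace ℝ (Fin 2))
        = ((Int.gcd p q : ℤ)) • (p₁ • a₁ + q₁ • a₂) := by
      rw [smul_add, ← mul_smul, ← mul_smul, ← hp₁, ← hq₁]
    have hnorm : ‖p • a₁ + q • a₂‖ = (Int.gcd p q : ℝ) * ‖p₁ • a₁ + q₁ • a₂‖ := by
      rw [hveq, ← Int.cast_smul_eq_zsmul ℝ, norm_smul]
      simp
    have hsw : s ≤ ‖p₁ • a₁ + q₁ • a₂‖ := hslb _ _ hwne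
    have hgR : (2:ℝ) ≤ (Int.gcd p q : ℝ) := by exact_mod_cast hg2
    rw [hnorm] at hrlt
    nlinarith [norm_nonneg (p₁ • a₁ + q₁ • a₂ : EuclideanSpace ℝ (Fin 2))]
  -- Bezout
  have hbez : (1:ℤ) = p * Int.gcdA p q + q * Int.gcdB p q := by
    have h := Int.gcd_eq_gcd_ab p q
    rw [hg1] at h
    exact_mod_cast h
  -- coordinates of v
  obtain ⟨vc0, hvc0⟩ : ∃ x : ℝ, x = (p:ℝ) * a₁ 0 + (q:ℝ) * a₂ 0 := ⟨_, rfl⟩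
  obtain ⟨vc1, hvc1⟩ : ∃ x : ℝ, x = (p:ℝ) * a₁ 1 + (q:ℝ) * a₂ 1 := ⟨_, rfl⟩
  obtain ⟨S2, hS2def⟩ : ∃ x : ℝ, x = vc0^2 + vc1^2 := ⟨_, rfl⟩
  have hS2norm : ‖p • a₁ + q • a₂‖^2 = S2 := by
    rw [hn, happ, happ, hS2def, hvc0, hvc1]
  have hσS2 : σ^2 ≤ S2 := by
    rw [← hS2norm]
    exact pow_le_pow_left₀ hσpos.le (hσs.trans hsS) 2
  have hsS2 : s^2 ≤ S2 := by
    rw [← hS2norm]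
    exact pow_le_pow_left₀ hspos.le hsS 2
  have hS2ub : S2 ≤ (s + σ/100)^2 := by
    rw [← hS2norm]
    exact pow_le_pow_left₀ (norm_nonneg _) hrlt.le 2
  have hS2pos : 0 < S2 := lt_of_lt_of_le (by positivity) hσS2
  -- the companion vector u' = P2 • a₁ + Q2 • a₂
  obtain ⟨dot0, hdot0⟩ : ∃ x : ℝ, x = vc0 * (((-(Int.gcdB p q) : ℤ) : ℝ) * a₁ 0 + ((Int.gcdA p q : ℤ) : ℝ) * a₂ 0)
      + vc1 * (((-(Int.gcdB p q) : ℤ) : ℝ) * a₁ 1 + ((Int.gcdA p q : ℤ) : ℝ) * a₂ 1) := ⟨_, rfl⟩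
  obtain ⟨k, hk⟩ : ∃ x : ℤ, x = -round (dot0 / S2) := ⟨_, rfl⟩
  obtain ⟨P2, hP2⟩ : ∃ x : ℤ, x = -(Int.gcdB p q) + k * p := ⟨_, rfl⟩
  obtain ⟨Q2, hQ2⟩ : ∃ x : ℤ, x = Int.gcdA p q + k * q := ⟨_, rfl⟩
  have hdet2 : p * Q2 - q * P2 = 1 := by
    rw [hP2, hQ2]
    linear_combination -hbez
  obtain ⟨uc0, huc0⟩ : ∃ x : ℝ, x = (P2:ℝ) * a₁ 0 + (Q2:ℝ) * a₂ 0 := ⟨_, rfl⟩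
  obtain ⟨uc1, huc1⟩ : ∃ x : ℝ, x = (P2:ℝ) * a₁ 1 + (Q2:ℝ) * a₂ 1 := ⟨_, rfl⟩
  obtain ⟨N2, hN2def⟩ : ∃ x : ℝ, x = uc0^2 + uc1^2 := ⟨_, rfl⟩
  obtain ⟨Pd, hPd⟩ : ∃ x : ℝ, x = vc0 * uc0 + vc1 * uc1 := ⟨_, rfl⟩
  have hPd_eq : Pd = dot0 + (k:ℝ) * S2 := by
    rw [hPd, huc0, huc1, hdot0, hP2, hQ2, hS2def, hvc0, hvc1]
    push_cast
    ring
  have hPdabs : |Pd| ≤ S2 / 2 := by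
    have h1 : Pd = S2 * (dot0 / S2 - (round (dot0 / S2) : ℤ)) := by
      rw [hPd_eq, hk]
      push_cast
      field_simp
      ring
    rw [h1, abs_mul, abs_of_pos hS2pos]
    have h2 := abs_sub_round (dot0 / S2)
    calc S2 * |dot0 / S2 - (round (dot0 / S2) : ℤ)| ≤ S2 * (1/2) :=
          mul_le_mul_of_nonneg_left h2 hS2pos.le
      _ = S2 / 2 := by ring
  have hPb : Pd^2 ≤ S2^2 / 4 := by
    obtain ⟨h1, h2⟩ := abs_le.mp hPdabs
    nlinarith
  have hdetc : (p:ℝ) * (Q2:ℝ) - (q:ℝ) * (P2:ℝ) = 1 := by exact_mod_cast hdet2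
  have hdetR : vc0 * uc1 - vc1 * uc0 = a₁ 0 * a₂ 1 - a₁ 1 * a₂ 0 := by
    rw [hvc0, hvc1, huc0, huc1]
    linear_combination (a₁ 0 * a₂ 1 - a₁ 1 * a₂ 0) * hdetc
  obtain ⟨D, hD⟩ : ∃ x : ℝ, x = |a₁ 0 * a₂ 1 - a₁ 1 * a₂ 0| := ⟨_, rfl⟩
  have hidD : Pd^2 + D^2 = S2 * N2 := by
    rw [hD, sq_abs, ← hdetR, hPd, hS2def, hN2def]
    ring
  have hD0 : 0 ≤ D := hD ▸ abs_nonneg _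
  -- u' is a nonzero lattice vector
  have hune : (P2 • a₁ + Q2 • a₂ : EuclideanSpace ℝ (Fin 2)) ≠ 0 := by
    intro h
    obtain ⟨e1, e2⟩ := hzero _ _ h
    rw [e1, e2] at hdet2
    simp at hdet2
  have hNnorm : ‖P2 • a₁ + Q2 • a₂‖^2 = N2 := by
    rw [hn, happ, happ, hN2def, huc0, huc1]
  have hNs : s^2 ≤ N2 := by
    rw [← hNnorm]
    exact pow_le_pow_left₀ hspos.le (hslb _ _ hune) 2
  -- final assembly helper
  have hfinish : 39*σ^6 ≤ 64*(D*d)^2 → σ ^ 3 ≤ (8 / Real.sqrt 39) * |a₁ 0 * a₂ 1 - a₁ 1 * a₂ 0| * d := by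
    intro h
    rw [← hD]
    exact aux_conv' σ D d hσpos hD0 hd h
  -- parity case analysis
  rcases Int.even_or_odd p with hp | hp
  · rcases Int.even_or_odd q with hq | hq
    · -- even, even: impossible since gcd = 1
      exfalso
      obtain ⟨i, hi⟩ := hp
      obtain ⟨j, hj⟩ := hq
      have h2p : (2:ℤ) ∣ p := ⟨i, by omega⟩
      have h2q : (2:ℤ) ∣ q := ⟨j, by omega⟩
      have h2g := Int.dvd_gcd h2p h2q
      rw [hg1] at h2g
      norm_num at h2g
    · -- p even, q odd : S2 ≥ 4σ² via m(a₂/2), large branch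
      obtain ⟨i, hi⟩ := hp
      obtain ⟨j, hj⟩ := hq
      have hpc : (p:ℝ) = 2*(i:ℝ) := by push_cast [hi]; ring
      have hqc : (q:ℝ) = 2*(j:ℝ) + 1 := by push_cast [hj]; ring
      have hle : σ ≤ ‖(2:ℝ)⁻¹ • a₂ - ((-i) • a₁ + (-j) • a₂)‖ :=
        hσ2.trans (hmub _ (-i) (-j))
      have heq : ‖(2:ℝ)⁻¹ • a₂ - ((-i) • a₁ + (-j) • a₂)‖^2 = S2 / 4 := by
        rw [hn]
        simp only [PiLp.sub_apply, PiLp.smul_apply, smul_eq_mul, happ]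
        rw [hS2def, hvc0, hvc1, hpc, hqc]
        push_cast
        ring
      have h4σ : 4*σ^2 ≤ S2 := by
        have := pow_le_pow_left₀ hσpos.le hle 2
        rw [heq] at this
        linarith
      exact hfinish (aux_large' σ s S2 N2 Pd D d hσpos hσs h4σ hS2ub hNs hPb hidD hσ4d hd hD0)
  · rcases Int.even_or_odd q with hq | hq
    · -- p odd, q even : S2 ≥ 4σ² via m(a₁/2), large branch
      obtain ⟨i, hi⟩ := hp
      obtain ⟨j, hj⟩ := hq
      have hpc : (p:ℝ) = 2*(i:ℝ) + 1 := by push_cast [hi]; ring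
      have hqc : (q:ℝ) = 2*(j:ℝ) := by push_cast [hj]; ring
      have hle : σ ≤ ‖(2:ℝ)⁻¹ • a₁ - ((-i) • a₁ + (-j) • a₂)‖ :=
        hσ1.trans (hmub _ (-i) (-j))
      have heq : ‖(2:ℝ)⁻¹ • a₁ - ((-i) • a₁ + (-j) • a₂)‖^2 = S2 / 4 := by
        rw [hn]
        simp only [PiLp.sub_apply, PiLp.smul_apply, smul_eq_mul, happ]
        rw [hS2def, hvc0, hvc1, hpc, hqc]
        push_cast
        ring
      have h4σ : 4*σ^2 ≤ S2 := by
        have := pow_le_pow_left₀ hσpos.le hle 2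
        rw [heq] at this
        linarith
      exact hfinish (aux_large' σ s S2 N2 Pd D d hσpos hσs h4σ hS2ub hNs hPb hidD hσ4d hd hD0)
    · -- p odd, q odd
      obtain ⟨i, hi⟩ := hp
      obtain ⟨j, hj⟩ := hq
      have hpc : (p:ℝ) = 2*(i:ℝ) + 1 := by push_cast [hi]; ring
      have hqc : (q:ℝ) = 2*(j:ℝ) + 1 := by push_cast [hj]; ring
      rcases le_or_gt S2 (4*σ^2) with hSsm | hSlg
      · -- small branch
        set t : ℝ := m ((2:ℝ)⁻¹ • (a₁ + a₂)) with htdef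
        have ht0 : 0 ≤ t := hm0 _
        have htle : t ≤ ‖(2:ℝ)⁻¹ • (a₁ + a₂) - ((-i) • a₁ + (-j) • a₂)‖ := hmub _ (-i) (-j)
        have hteq : ‖(2:ℝ)⁻¹ • (a₁ + a₂) - ((-i) • a₁ + (-j) • a₂)‖^2 = S2 / 4 := by
          rw [hn]
          simp only [PiLp.sub_apply, PiLp.smul_apply, PiLp.add_apply, smul_eq_mul, happ]
          rw [hS2def, hvc0, hvc1, hpc, hqc]
          push_cast
          ring
        have ht : t^2 ≤ S2/4 := by
          rw [← hteq]
          exact pow_le_pow_left₀ ht0 htle 2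
        have hB : σ^2 ≤ t^2 + 4*d^2 := by
          have := (Real.le_sqrt hσpos.le (by positivity)).mp hσsq
          linarith
        -- parity of (P2, Q2): one of them is odd, the other even
        have hN4 : 4*σ^2 ≤ N2 := by
          rcases Int.even_or_odd P2 with hP2e | hP2o
          · -- P2 even ⇒ Q2 odd ⇒ use m(a₂/2)
            have hQ2o : Odd Q2 := by
              rcases Int.even_or_odd Q2 with h | h
              · exfalso
                have heven : Even (p * Q2 - q * P2) := (h.mul_left p).sub (hP2e.mul_left q)
                rw [hdet2] at heven
                norm_num at heven
              · exact h
            obtain ⟨a, ha⟩ := hP2e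
            obtain ⟨b, hb⟩ := hQ2o
            have hac : (P2:ℝ) = 2*(a:ℝ) := by push_cast [ha]; ring
            have hbc : (Q2:ℝ) = 2*(b:ℝ) + 1 := by push_cast [hb]; ring
            have hle : σ ≤ ‖(2:ℝ)⁻¹ • a₂ - ((-a) • a₁ + (-b) • a₂)‖ :=
              hσ2.trans (hmub _ (-a) (-b))
            have heq : ‖(2:ℝ)⁻¹ • a₂ - ((-a) • a₁ + (-b) • a₂)‖^2 = N2 / 4 := by
              rw [hn]
              simp only [PiLp.sub_apply, PiLp.smul_apply, smul_eq_mul, happ]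
              rw [hN2def, huc0, huc1, hac, hbc]
              push_cast
              ring
            have := pow_le_pow_left₀ hσpos.le hle 2
            rw [heq] at this
            linarith
          · -- P2 odd ⇒ Q2 even ⇒ use m(a₁/2)
            have hQ2e : Even Q2 := by
              rcases Int.even_or_odd Q2 with h | h
              · exact h
              · exfalso
                have heven : Even (p * Q2 - q * P2) :=
                  Odd.sub_odd (Odd.mul ⟨i, hi⟩ h) (Odd.mul ⟨j, hj⟩ hP2o)
                rw [hdet2] at heven
                norm_num at heven
            obtain ⟨a, ha⟩ := hP2o
            obtain ⟨b, hb⟩ := hQ2e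
            have hac : (P2:ℝ) = 2*(a:ℝ) + 1 := by push_cast [ha]; ring
            have hbc : (Q2:ℝ) = 2*(b:ℝ) := by push_cast [hb]; ring
            have hle : σ ≤ ‖(2:ℝ)⁻¹ • a₁ - ((-a) • a₁ + (-b) • a₂)‖ :=
              hσ1.trans (hmub _ (-a) (-b))
            have heq : ‖(2:ℝ)⁻¹ • a₁ - ((-a) • a₁ + (-b) • a₂)‖^2 = N2 / 4 := by
              rw [hn]
              simp only [PiLp.sub_apply, PiLp.smul_apply, smul_eq_mul, happ]
              rw [hN2def, huc0, huc1, hac, hbc]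
              push_cast
              ring
            have := pow_le_pow_left₀ hσpos.le hle 2
            rw [heq] at this
            linarith
        exact hfinish (aux_small' σ S2 N2 Pd D t d hσpos hσS2 hSsm hN4 hPb hidD ht0 ht hB hσ4d hd hD0)
      · exact hfinish (aux_large' σ s S2 N2 Pd D d hσpos hσs hSlg.le hS2ub hNs hPb hidD hσ4d hd hD0)
end

section
/- Let x, y, d be real numbers with x² + y² ≥ 1, |x| ≤ 1/2, y > 0, 1/8 ≤ d ≤ 1/(4√3), and 8d ≥ √(x² + y²). Then (x² + y²)^{3/2}/(8·y·d) ≤ 8/√39. -/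
/-- Case computation in the type `B₂` flat systolic estimate:
on the stated domain, `(x² + y²)^{3/2}/(8yd) ≤ 8/√39`. -/
theorem stmt5 (x y d : ℝ) (h₁ : 1 ≤ x ^ 2 + y ^ 2) (h₂ : |x| ≤ 1 / 2)
    (hy : 0 < y) (h₃ : 1 / 8 ≤ d) (h₄ : d ≤ 1 / (4 * Real.sqrt 3))
    (h₅ : Real.sqrt (x ^ 2 + y ^ 2) ≤ 8 * d) :
    (x ^ 2 + y ^ 2) ^ ((3 : ℝ) / 2) / (8 * y * d) ≤ 8 / Real.sqrt 39 := by
  set t := x ^ 2 + y ^ 2 with htdef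
  have ht0 : (0:ℝ) ≤ t := by positivity
  set s := Real.sqrt t with hsdef
  have hst : s ^ 2 = t := Real.sq_sqrt ht0
  have hrw : t ^ ((3:ℝ)/2) = s ^ 3 := by
    rw [hsdef, Real.sqrt_eq_rpow, ← Real.rpow_natCast (t ^ ((1:ℝ)/2)) 3,
      ← Real.rpow_mul ht0]
    norm_num
  have hs1 : (1:ℝ) ≤ s := by
    rw [hsdef]
    have := Real.sqrt_le_sqrt h₁
    simpa using this
  have hd0 : (0:ℝ) < d := by linarith
  have h3pos : (0:ℝ) < Real.sqrt 3 := by positivity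
  have h3sq : Real.sqrt 3 ^ 2 = 3 := Real.sq_sqrt (by norm_num)
  -- from h₄ : d ≤ 1/(4√3), get 4√3·d ≤ 1
  have hd3 : 4 * Real.sqrt 3 * d ≤ 1 := by
    rw [le_div_iff₀ (by positivity)] at h₄
    linarith
  -- s ≤ 8d, so √3 · s ≤ 2, so t = s² ≤ 4/3
  have ht43 : t ≤ 4/3 := by
    have h1 : Real.sqrt 3 * s ≤ 2 := by nlinarith
    nlinarith [Real.sqrt_nonneg 3]
  have hx2 : x ^ 2 ≤ 1/4 := by
    have := sq_abs x
    nlinarith [abs_nonneg x]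
  have hy2 : 39 * t ^ 2 ≤ 64 * y ^ 2 := by nlinarith [mul_nonneg (sub_nonneg.2 h₁) (sub_nonneg.2 ht43)]
  have h39 : Real.sqrt 39 ^ 2 = 39 := Real.sq_sqrt (by norm_num)
  have h39pos : (0:ℝ) < Real.sqrt 39 := by positivity
  have key : t * Real.sqrt 39 ≤ 8 * y := by
    nlinarith [Real.sqrt_nonneg 39, mul_nonneg ht0 (Real.sqrt_nonneg 39), hy]
  rw [hrw, div_le_div_iff₀ (by positivity) h39pos]
  calc s ^ 3 * Real.sqrt 39 = s * (t * Real.sqrt 39) := by rw [← hst]; ring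
    _ ≤ s * (8 * y) := mul_le_mul_of_nonneg_left key (by linarith)
    _ ≤ (8 * d) * (8 * y) := mul_le_mul_of_nonneg_right h₅ (by linarith)
    _ = 8 * (8 * y * d) := by ring
end

section
/- For every real number d with 1/(4√3) ≤ d ≤ √3/4 one has (16·d² + 1)^{3/2}/(8·d·√(16·d² + 3/4)) ≤ 8/√39, with equality at d = 1/(4√3). -/
lemma key_rpow (x : ℝ) (hx : 0 < x) : (x ^ ((3:ℝ)/2))^2 = x^3 := by
  rw [sq, ← Real.rpow_add hx]
  norm_num

/-- Case computation in the type `B₂` flat systolic estimate: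
for `1/(4√3) ≤ d ≤ √3/4`, `(16d² + 1)^{3/2}/(8d√(16d² + 3/4)) ≤ 8/√39`,
with equality at `d = 1/(4√3)`. -/
theorem stmt6 :
    (∀ d : ℝ, 1 / (4 * Real.sqrt 3) ≤ d → d ≤ Real.sqrt 3 / 4 →
      (16 * d ^ 2 + 1) ^ ((3 : ℝ) / 2) / (8 * d * Real.sqrt (16 * d ^ 2 + 3 / 4))
        ≤ 8 / Real.sqrt 39) ∧
    (16 * (1 / (4 * Real.sqrt 3)) ^ 2 + 1) ^ ((3 : ℝ) / 2) /
        (8 * (1 / (4 * Real.sqrt 3)) * Real.sqrt (16 * (1 / (4 * Real.sqrt 3)) ^ 2 + 3 / 4))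
      = 8 / Real.sqrt 39 := by
  have h39 : (0:ℝ) < Real.sqrt 39 := Real.sqrt_pos.mpr (by norm_num)
  have h39' : Real.sqrt 39 ^ 2 = 39 := Real.sq_sqrt (by norm_num)
  have h3 : (0:ℝ) < Real.sqrt 3 := Real.sqrt_pos.mpr (by norm_num)
  have h3' : Real.sqrt 3 ^ 2 = 3 := Real.sq_sqrt (by norm_num)
  constructor
  · intro d hd1 hd2
    have hd0 : 0 < d := lt_of_lt_of_le (by positivity) hd1
    have hs1 : 1/48 ≤ d^2 := by
      have := pow_le_pow_left₀ (by positivity) hd1 2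
      calc (1:ℝ)/48 = (1 / (4 * Real.sqrt 3))^2 := by
            field_simp
            nlinarith [h3']
        _ ≤ d^2 := this
    have hs2 : d^2 ≤ 3/16 := by
      have := pow_le_pow_left₀ (le_of_lt hd0) hd2 2
      calc d^2 ≤ (Real.sqrt 3 / 4)^2 := this
        _ = 3/16 := by nlinarith [h3']
    have hy : (0:ℝ) < 16 * d^2 + 3/4 := by positivity
    have hysq : Real.sqrt (16 * d^2 + 3/4) ^ 2 = 16 * d^2 + 3/4 :=
      Real.sq_sqrt (le_of_lt hy)
    have hyp : (0:ℝ) < Real.sqrt (16 * d^2 + 3/4) := Real.sqrt_pos.mpr hy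
    have hx : (0:ℝ) < 16 * d^2 + 1 := by positivity
    have hA : (0:ℝ) ≤ (16 * d^2 + 1) ^ ((3:ℝ)/2) := Real.rpow_nonneg (le_of_lt hx) _
    have hB : (0:ℝ) < 8 * d * Real.sqrt (16 * d^2 + 3/4) := by positivity
    rw [div_le_div_iff₀ hB h39]
    have hsq : ((16 * d^2 + 1) ^ ((3:ℝ)/2) * Real.sqrt 39)^2
        ≤ (8 * (8 * d * Real.sqrt (16 * d^2 + 3/4)))^2 := by
      have h1 : ((16 * d^2 + 1) ^ ((3:ℝ)/2) * Real.sqrt 39)^2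
          = (16 * d^2 + 1)^3 * 39 := by
        rw [mul_pow, key_rpow _ hx, h39']
      have h2 : (8 * (8 * d * Real.sqrt (16 * d^2 + 3/4)))^2
          = 64 * (64 * d^2 * (16 * d^2 + 3/4)) := by
        rw [mul_pow, mul_pow, mul_pow, hysq]; ring
      rw [h1, h2]
      nlinarith [mul_nonneg (by nlinarith : (0:ℝ) ≤ 48*d^2 - 1)
        (by nlinarith : (0:ℝ) ≤ -3328*(d^2)^2 + 672*d^2 + 39), sq_nonneg d]
    have := Real.sqrt_le_sqrt hsq
    rwa [Real.sqrt_sq (by positivity), Real.sqrt_sq (by positivity)] at this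
  · set d := 1 / (4 * Real.sqrt 3) with hd
    clear_value d
    have hd0 : 0 < d := by rw [hd]; positivity
    have hs : d^2 = 1/48 := by
      rw [hd]; field_simp; nlinarith [h3']
    have hx : 16 * d^2 + 1 = 4/3 := by rw [hs]; norm_num
    have hy : 16 * d^2 + 3/4 = 13/12 := by rw [hs]; norm_num
    have hysq : Real.sqrt (16 * d^2 + 3/4) ^ 2 = 13/12 := by
      rw [Real.sq_sqrt (by rw [hy]; norm_num)]; exact hy
    have hyp : 0 < Real.sqrt (16 * d^2 + 3/4) := Real.sqrt_pos.mpr (by rw [hy]; norm_num)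
    have hB : (0:ℝ) < 8 * d * Real.sqrt (16 * d^2 + 3/4) := by positivity
    have hA : (0:ℝ) ≤ (16 * d^2 + 1) ^ ((3:ℝ)/2) :=
      Real.rpow_nonneg (by rw [hx]; norm_num) _
    have hL : 0 ≤ (16 * d^2 + 1) ^ ((3:ℝ)/2) / (8 * d * Real.sqrt (16 * d^2 + 3/4)) :=
      div_nonneg hA (le_of_lt hB)
    have hR : (0:ℝ) ≤ 8 / Real.sqrt 39 := by positivity
    have hsq : ((16 * d^2 + 1) ^ ((3:ℝ)/2) / (8 * d * Real.sqrt (16 * d^2 + 3/4)))^2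
        = (8 / Real.sqrt 39)^2 := by
      rw [div_pow, div_pow, key_rpow _ (by rw [hx]; norm_num), hx, h39']
      rw [mul_pow, mul_pow, hysq, hs]
      norm_num
    have := congrArg Real.sqrt hsq
    rwa [Real.sqrt_sq hL, Real.sqrt_sq hR] at this
end

section
/- Let x, y be real numbers with 1 ≤ x² + y² ≤ 4, |x| ≤ 1/2, and y > 0. Then (x² + y²)^{3/2}/(2·√3·y) ≤ 8/√45. -/
/-- Case computation in the type `B₂` flat systolic estimate:
if `1 ≤ x² + y² ≤ 4`, `|x| ≤ 1/2` and `y > 0`, then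
`(x² + y²)^{3/2}/(2√3·y) ≤ 8/√45`. -/
theorem stmt8 (x y : ℝ) (h₁ : 1 ≤ x ^ 2 + y ^ 2) (h₂ : x ^ 2 + y ^ 2 ≤ 4)
    (h₃ : |x| ≤ 1 / 2) (hy : 0 < y) :
    (x ^ 2 + y ^ 2) ^ ((3 : ℝ) / 2) / (2 * Real.sqrt 3 * y) ≤ 8 / Real.sqrt 45 := by
  set s := x ^ 2 + y ^ 2 with hs_def
  have hs : (0 : ℝ) ≤ s := by positivity
  have hx2 : x ^ 2 ≤ 1 / 4 := by
    have := sq_abs x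
    nlinarith [sq_nonneg (|x| - 1/2), abs_nonneg x]
  have h32 : s ^ ((3 : ℝ) / 2) = Real.sqrt (s ^ 3) := by
    rw [show ((3 : ℝ) / 2) = (3 : ℕ) * (1 / 2 : ℝ) by norm_num,
      Real.rpow_mul hs, Real.rpow_natCast, Real.sqrt_eq_rpow]
  rw [h32, div_le_div_iff₀ (by positivity) (by positivity)]
  have key : 45 * s ^ 3 ≤ 768 * y ^ 2 := by
    have hfac : 0 ≤ (4 - s) * (15 * s ^ 2 + 60 * s - 16) := by
      apply mul_nonneg (by linarith)
      nlinarith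
    nlinarith
  calc Real.sqrt (s ^ 3) * Real.sqrt 45 = Real.sqrt (45 * s ^ 3) := by
        rw [← Real.sqrt_mul (by positivity), mul_comm]
    _ ≤ Real.sqrt (768 * y ^ 2) := Real.sqrt_le_sqrt key
    _ = Real.sqrt 768 * y := by
        rw [Real.sqrt_mul (by norm_num), Real.sqrt_sq hy.le]
    _ = 8 * (2 * Real.sqrt 3 * y) := by
        rw [show (768 : ℝ) = 16 ^ 2 * 3 by norm_num,
          Real.sqrt_mul (by positivity), Real.sqrt_sq (by norm_num)]
        ring
end

section
/- Let δ ∈ (0, π) satisfy (cos δ − 1)/2 = cos((π − δ)/√2), let D = arccos((cos δ − 1)/2), and let d₀ = √(π² − D²). Then d₀ > π/2 and π²/(2·√2·d₀) > 8/√39. -/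
open Real

set_option maxHeartbeats 1000000 in
/-- With `δ` the optimal screw angle, `D = arccos((cos δ − 1)/2)` and
`d₀ = √(π² − D²)`, one has `d₀ > π/2` and the singular systolic ratio
`π²/(2√2·d₀)` exceeds the optimal flat ratio `8/√39` for type `B₂`. -/
theorem stmt12 (δ D d₀ : ℝ) (hδ : δ ∈ Set.Ioo 0 π)
    (heq : (Real.cos δ - 1) / 2 = Real.cos ((π - δ) / Real.sqrt 2))
    (hD : D = Real.arccos ((Real.cos δ - 1) / 2))
    (hd₀ : d₀ = Real.sqrt (π ^ 2 - D ^ 2)) :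
    d₀ > π / 2 ∧ π ^ 2 / (2 * Real.sqrt 2 * d₀) > 8 / Real.sqrt 39 := by
  obtain ⟨h0, hπ⟩ := hδ
  have s2 : Real.sqrt 2 ^ 2 = 2 := Real.sq_sqrt (by norm_num)
  have s2pos : (0:ℝ) < Real.sqrt 2 := Real.sqrt_pos.mpr (by norm_num)
  have s2lb : (1.414:ℝ) < Real.sqrt 2 := by nlinarith [s2, s2pos]
  have s2ub : Real.sqrt 2 < 1.415 := by nlinarith [s2, s2pos]
  have pil : (3.141592:ℝ) < π := Real.pi_gt_d6
  have piu : π < 3.141593 := Real.pi_lt_d6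
  set a := (π - δ) / Real.sqrt 2 with ha
  have ha0 : 0 ≤ a := div_nonneg (by linarith) s2pos.le
  have haπ : a ≤ π := by
    rw [ha, div_le_iff₀ s2pos]; nlinarith
  -- upper bound on δ from the defining equation
  have hδub : δ < 0.9 := by
    by_contra hcon
    push_neg at hcon
    have h1 : Real.cos δ ≤ Real.cos 0.9 :=
      Real.cos_le_cos_of_nonneg_of_le_pi (by norm_num) hπ.le hcon
    have hcos09 : Real.cos 0.9 ≤ 0.63 := by
      have hb := Real.cos_bound (x := 0.9) (by rw [abs_of_nonneg] <;> norm_num)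
      rw [abs_le] at hb
      have h2 := hb.2
      rw [abs_of_nonneg (by norm_num : (0:ℝ) ≤ 0.9)] at h2
      norm_num at h2 ⊢
      linarith
    -- lower bound on cos a
    set A := (π - (0.9:ℝ)) / Real.sqrt 2 with hA
    have haA : a ≤ A := by
      rw [ha, hA, div_le_div_iff₀ s2pos s2pos]; nlinarith
    have hAπ : A ≤ π := by rw [hA, div_le_iff₀ s2pos]; nlinarith
    have hcosA : Real.cos A ≤ Real.cos a :=
      Real.cos_le_cos_of_nonneg_of_le_pi ha0 hAπ haA
    have hA2 : (0:ℝ) ≤ A - π / 2 := by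
      rw [hA, sub_nonneg, le_div_iff₀ s2pos]
      nlinarith
    have hA3 : A - π / 2 ≤ 0.1 := by
      rw [hA, sub_le_iff_le_add, div_le_iff₀ s2pos]; nlinarith
    have hcosA2 : -(0.1:ℝ) ≤ Real.cos A := by
      have : Real.cos A = Real.cos ((A - π/2) + π/2) := by ring_nf
      rw [this, Real.cos_add_pi_div_two]
      have := Real.sin_le hA2
      linarith
    -- contradiction
    have : (Real.cos δ - 1) / 2 ≤ -0.185 := by linarith
    rw [heq] at this
    linarith
  -- identify D with a
  have hDa : D = a := by
    rw [hD, heq, Real.arccos_cos ha0 haπ]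
  -- a² = (π-δ)²/2
  have ha2 : a ^ 2 = (π - δ) ^ 2 / 2 := by
    rw [ha, div_pow, s2]
  have hd2lt : D ^ 2 < 3 * π ^ 2 / 4 := by
    rw [hDa, ha2]; nlinarith
  have hfirst : d₀ > π / 2 := by
    rw [hd₀, gt_iff_lt, Real.lt_sqrt (by positivity)]
    nlinarith [hd2lt, Real.pi_pos]
  refine ⟨hfirst, ?_⟩
  have hd₀pos : 0 < d₀ := by linarith [Real.pi_pos, hfirst]
  have hsq : d₀ ^ 2 = π ^ 2 - D ^ 2 := by
    rw [hd₀, Real.sq_sqrt (by nlinarith)]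
  -- lower bound on D²
  have hD2lb : (π - 0.9) ^ 2 / 2 < D ^ 2 := by
    rw [hDa, ha2]
    have : π - 0.9 < π - δ := by linarith
    nlinarith
  have key : 512 * d₀ ^ 2 < 39 * π ^ 4 := by
    nlinarith [hsq, hD2lb, pil, piu, sq_nonneg (π - 3.141592), sq_nonneg (π + 3.141593), Real.pi_pos]
  have s39 : Real.sqrt 39 ^ 2 = 39 := Real.sq_sqrt (by norm_num)
  have s39pos : (0:ℝ) < Real.sqrt 39 := Real.sqrt_pos.mpr (by norm_num)
  rw [gt_iff_lt, div_lt_div_iff₀ s39pos (by positivity)]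
  have hmain : 16 * Real.sqrt 2 * d₀ < π ^ 2 * Real.sqrt 39 := by
    have hlhs : (16 * Real.sqrt 2 * d₀) ^ 2 < (π ^ 2 * Real.sqrt 39) ^ 2 := by
      have e1 : (16 * Real.sqrt 2 * d₀) ^ 2 = 512 * d₀ ^ 2 := by
        rw [mul_pow, mul_pow, s2]; ring
      have e2 : (π ^ 2 * Real.sqrt 39) ^ 2 = 39 * π ^ 4 := by
        rw [mul_pow, s39]; ring
      rw [e1, e2]; exact key
    exact lt_of_pow_lt_pow_left₀ 2 (by positivity) hlhs
  nlinarith [hmain]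
end

section
/- For every α ∈ [0, π], the function β ↦ arccos(sin²β + cos²β·cos α) is antitone (monotonically non-increasing) on the interval [0, π/2]. -/
open Real

/-- On the round sphere, the distance `arccos(sin²β + cos²β·cos α)` between two
points of latitude `β` with longitudes differing by `α` is non-increasing in the
latitude `β ∈ [0, π/2]`, for each `α ∈ [0, π]`. -/
theorem stmt13 (α : ℝ) (hα : α ∈ Set.Icc 0 π) :
    AntitoneOn (fun β : ℝ => Real.arccos (Real.sin β ^ 2 + Real.cos β ^ 2 * Real.cos α))
      (Set.Icc 0 (π / 2)) := by
  intro a ha b hb hab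
  have hca : Real.cos α ≤ 1 := Real.cos_le_one α
  have hca' : -1 ≤ Real.cos α := Real.neg_one_le_cos α
  have key : ∀ x : ℝ, Real.sin x ^ 2 + Real.cos x ^ 2 * Real.cos α
      = Real.cos α + Real.sin x ^ 2 * (1 - Real.cos α) := by
    intro x
    have := Real.sin_sq_add_cos_sq x
    nlinarith [this]
  have hsab : Real.sin a ≤ Real.sin b := by
    apply Real.sin_le_sin_of_le_of_le_pi_div_two (by linarith [ha.1, Real.pi_pos]) hb.2 hab
  have hsa : 0 ≤ Real.sin a := Real.sin_nonneg_of_nonneg_of_le_pi ha.1 (by linarith [ha.2, Real.pi_pos])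
  have hsq : Real.sin a ^ 2 ≤ Real.sin b ^ 2 := by nlinarith
  simp only
  apply Real.strictAntiOn_arccos.antitoneOn
  · constructor <;> rw [key] <;> nlinarith [Real.sin_sq_le_one a]
  · constructor <;> rw [key] <;> nlinarith [Real.sin_sq_le_one b]
  · rw [key, key]; nlinarith
end

section
/- The function H(β) = 2·arccos(√2·sin β) − √2·arccos(tan β) is antitone (monotonically non-increasing) on the interval [0, π/4], satisfies H(π/4) = 0, and consequently H(β) ≥ 0 for all β ∈ [0, π/4]. -/
open Real

lemma stmt14_aux :
    StrictAntiOn (fun β : ℝ => 2 * Real.arccos (Real.sqrt 2 * Real.sin β)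
        - Real.sqrt 2 * Real.arccos (Real.tan β)) (Set.Icc 0 (π / 4)) := by
  have hpi : (0:ℝ) < π / 4 := by positivity
  apply strictAntiOn_of_deriv_neg (convex_Icc _ _)
  · -- continuity
    apply ContinuousOn.sub
    · exact (continuous_const.mul (Real.continuous_arccos.comp
        (continuous_const.mul Real.continuous_sin))).continuousOn
    · apply ContinuousOn.mul continuousOn_const
      apply Real.continuous_arccos.comp_continuousOn
      intro x hx
      refine (Real.continuousAt_tan.2 ?_).continuousWithinAt
      have h1 : x ∈ Set.Icc 0 (π/4) := hx
      have : Real.cos x > 0 := by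
        apply Real.cos_pos_of_mem_Ioo
        constructor <;> nlinarith [h1.1, h1.2, Real.pi_pos]
      linarith
  · rw [interior_Icc]
    intro x hx
    obtain ⟨hx0, hx1⟩ := hx
    have hc : 0 < Real.cos x := by
      apply Real.cos_pos_of_mem_Ioo
      constructor <;> nlinarith [Real.pi_pos]
    have hs0 : 0 < Real.sin x := Real.sin_pos_of_pos_of_lt_pi hx0 (by nlinarith [Real.pi_pos])
    have hsc : Real.sin x < Real.cos x := by
      have := Real.cos_lt_cos_of_nonneg_of_le_pi (by positivity) (by nlinarith [Real.pi_pos])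
        (show x < π/2 - x by linarith)
      rwa [Real.cos_pi_div_two_sub] at this
    have hpyt : Real.sin x ^ 2 + Real.cos x ^ 2 = 1 := Real.sin_sq_add_cos_sq x
    have hd : 0 < 2 * Real.cos x ^ 2 - 1 := by nlinarith
    have hs2 : Real.sqrt 2 = Real.sqrt 2 := rfl
    have h2 : (0:ℝ) < Real.sqrt 2 := by positivity
    have hsq2 : Real.sqrt 2 ^ 2 = 2 := Real.sq_sqrt (by norm_num)
    -- argument bounds
    have ha1 : Real.sqrt 2 * Real.sin x ≠ -1 := by nlinarith
    have ha2 : Real.sqrt 2 * Real.sin x ≠ 1 := by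
      intro h
      have : (Real.sqrt 2 * Real.sin x)^2 = 1 := by rw [h]; ring
      nlinarith
    have ht : Real.tan x = Real.sin x / Real.cos x := Real.tan_eq_sin_div_cos x
    have htlt : Real.tan x < 1 := by rw [ht]; rw [div_lt_one hc]; exact hsc
    have htpos : 0 < Real.tan x := by rw [ht]; positivity
    have hb1 : Real.tan x ≠ -1 := by linarith
    have hb2 : Real.tan x ≠ 1 := ne_of_lt htlt
    -- derivatives
    have d1 : HasDerivAt (fun β => Real.arccos (Real.sqrt 2 * Real.sin β))
        (-(1 / Real.sqrt (1 - (Real.sqrt 2 * Real.sin x) ^ 2)) * (Real.sqrt 2 * Real.cos x)) x :=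
      by have := (Real.hasDerivAt_arccos ha1 ha2).comp x ((Real.hasDerivAt_sin x).const_mul (Real.sqrt 2)); exact this
    have d2 : HasDerivAt (fun β => Real.arccos (Real.tan β))
        (-(1 / Real.sqrt (1 - Real.tan x ^ 2)) * (1 / Real.cos x ^ 2)) x :=
      (Real.hasDerivAt_arccos hb1 hb2).comp x (Real.hasDerivAt_tan hc.ne')
    have dH : HasDerivAt (fun β : ℝ => 2 * Real.arccos (Real.sqrt 2 * Real.sin β)
        - Real.sqrt 2 * Real.arccos (Real.tan β))
        (2 * (-(1 / Real.sqrt (1 - (Real.sqrt 2 * Real.sin x) ^ 2)) * (Real.sqrt 2 * Real.cos x))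
          - Real.sqrt 2 * (-(1 / Real.sqrt (1 - Real.tan x ^ 2)) * (1 / Real.cos x ^ 2))) x :=
      (d1.const_mul 2).sub (d2.const_mul (Real.sqrt 2))
    rw [dH.deriv]
    -- simplify sqrt terms
    have e1 : 1 - (Real.sqrt 2 * Real.sin x) ^ 2 = 2 * Real.cos x ^ 2 - 1 := by
      rw [mul_pow, hsq2]; nlinarith
    have e2 : 1 - Real.tan x ^ 2 = (2 * Real.cos x ^ 2 - 1) / Real.cos x ^ 2 := by
      rw [ht, div_pow]
      field_simp
      nlinarith
    rw [e1, e2]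
    have hD : 0 < Real.sqrt (2 * Real.cos x ^ 2 - 1) := Real.sqrt_pos.2 hd
    have e3 : Real.sqrt ((2 * Real.cos x ^ 2 - 1) / Real.cos x ^ 2)
        = Real.sqrt (2 * Real.cos x ^ 2 - 1) / Real.cos x := by
      rw [Real.sqrt_div hd.le, Real.sqrt_sq hc.le]
    rw [e3]
    have hD2 : Real.sqrt (2 * Real.cos x ^ 2 - 1) ^ 2 = 2 * Real.cos x ^ 2 - 1 :=
      Real.sq_sqrt hd.le
    have goal : Real.sqrt 2 * ((Real.cos x / Real.sqrt (2 * Real.cos x ^ 2 - 1))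
        * (1 / Real.cos x ^ 2)) < 2 * ((1 / Real.sqrt (2 * Real.cos x ^ 2 - 1))
        * (Real.sqrt 2 * Real.cos x)) := by
      have k1 : Real.sqrt 2 * (Real.cos x / Real.sqrt (2 * Real.cos x ^ 2 - 1)
          * (1 / Real.cos x ^ 2)) = Real.sqrt 2 / (Real.cos x * Real.sqrt (2 * Real.cos x ^ 2 - 1)) := by
        field_simp
      have k2 : 2 * (1 / Real.sqrt (2 * Real.cos x ^ 2 - 1) * (Real.sqrt 2 * Real.cos x))
          = 2 * Real.sqrt 2 * Real.cos x / Real.sqrt (2 * Real.cos x ^ 2 - 1) := by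
        field_simp
      rw [k1, k2, div_lt_div_iff₀ (by positivity) hD]
      nlinarith [mul_pos (mul_pos h2 hD) hd]
    rw [one_div_div]
    nlinarith [goal]

/-- The function `H(β) = 2·arccos(√2·sin β) − √2·arccos(tan β)` is antitone on
`[0, π/4]`, vanishes at `π/4`, and hence is nonnegative on `[0, π/4]`. -/
theorem stmt14 :
    AntitoneOn (fun β : ℝ => 2 * Real.arccos (Real.sqrt 2 * Real.sin β)
        - Real.sqrt 2 * Real.arccos (Real.tan β)) (Set.Icc 0 (π / 4)) ∧
    (2 * Real.arccos (Real.sqrt 2 * Real.sin (π / 4))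
        - Real.sqrt 2 * Real.arccos (Real.tan (π / 4)) = 0) ∧
    ∀ β ∈ Set.Icc 0 (π / 4),
      0 ≤ 2 * Real.arccos (Real.sqrt 2 * Real.sin β)
        - Real.sqrt 2 * Real.arccos (Real.tan β) := by
  have hanti := stmt14_aux.antitoneOn
  have hval : 2 * Real.arccos (Real.sqrt 2 * Real.sin (π / 4))
      - Real.sqrt 2 * Real.arccos (Real.tan (π / 4)) = 0 := by
    rw [Real.sin_pi_div_four, Real.tan_pi_div_four]
    have : Real.sqrt 2 * (Real.sqrt 2 / 2) = 1 := by
      rw [mul_div_assoc', Real.mul_self_sqrt (by norm_num)]; norm_num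
    rw [this, Real.arccos_one]; ring
  refine ⟨hanti, hval, fun β hβ => ?_⟩
  have h := hanti hβ (Set.right_mem_Icc.2 (by positivity)) hβ.2
  simp only at h
  linarith
end

section
/- For every β ∈ (0, π/4), the function H(β) = 2·arccos(√2·sin β) − √2·arccos(tan β) is differentiable at β with derivative H′(β) = √2·(1 − 2·cos²β)/(cos β·√(1 − 2·sin²β)); in particular H′(β) < 0 on (0, π/4). -/
set_option maxHeartbeats 1000000


open Real

/-- For `β ∈ (0, π/4)`, the function `H(β) = 2·arccos(√2·sin β) − √2·arccos(tan β)`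
has derivative `√2·(1 − 2cos²β)/(cos β·√(1 − 2sin²β))` at `β`, and this
derivative is negative. -/
theorem stmt15 (β : ℝ) (hβ : β ∈ Set.Ioo 0 (π / 4)) :
    HasDerivAt (fun b : ℝ => 2 * Real.arccos (Real.sqrt 2 * Real.sin b)
        - Real.sqrt 2 * Real.arccos (Real.tan b))
      (Real.sqrt 2 * (1 - 2 * Real.cos β ^ 2)
        / (Real.cos β * Real.sqrt (1 - 2 * Real.sin β ^ 2))) β ∧
    Real.sqrt 2 * (1 - 2 * Real.cos β ^ 2)
        / (Real.cos β * Real.sqrt (1 - 2 * Real.sin β ^ 2)) < 0 := by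
  obtain ⟨hβ0, hβ4⟩ := hβ
  have hπ : 0 < π := Real.pi_pos
  have h2 : (0:ℝ) < Real.sqrt 2 := by positivity
  have hsq2 : Real.sqrt 2 ^ 2 = 2 := Real.sq_sqrt (by norm_num)
  have hc : 0 < Real.cos β := Real.cos_pos_of_mem_Ioo ⟨by linarith, by linarith⟩
  have hs : 0 < Real.sin β := Real.sin_pos_of_pos_of_lt_pi hβ0 (by linarith)
  have hsin_lt : Real.sin β < Real.sqrt 2 / 2 := by
    have := Real.sin_lt_sin_of_lt_of_le_pi_div_two (x := β) (y := π/4)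
      (by linarith) (by linarith) hβ4
    rwa [Real.sin_pi_div_four] at this
  have hcos_gt : Real.sqrt 2 / 2 < Real.cos β := by
    have := Real.cos_lt_cos_of_nonneg_of_le_pi (x := β) (y := π/4)
      hβ0.le (by linarith) hβ4
    rwa [Real.cos_pi_div_four] at this
  have hxlt : Real.sqrt 2 * Real.sin β < 1 := by nlinarith
  have hxpos : 0 < Real.sqrt 2 * Real.sin β := by positivity
  have hD0 : 0 < 1 - 2 * Real.sin β ^ 2 := by nlinarith
  have hD : 0 < Real.sqrt (1 - 2 * Real.sin β ^ 2) := Real.sqrt_pos.mpr hD0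
  have hDsq : Real.sqrt (1 - 2 * Real.sin β ^ 2) ^ 2 = 1 - 2 * Real.sin β ^ 2 :=
    Real.sq_sqrt hD0.le
  have htanpos : 0 < Real.tan β := Real.tan_pos_of_pos_of_lt_pi_div_two hβ0 (by linarith)
  have htanlt : Real.tan β < 1 := by
    have := Real.tan_lt_tan_of_nonneg_of_lt_pi_div_two (x := β) (y := π/4)
      hβ0.le (by linarith) hβ4
    rwa [Real.tan_pi_div_four] at this
  -- sqrt identities
  have hE1 : Real.sqrt (1 - (Real.sqrt 2 * Real.sin β) ^ 2)
      = Real.sqrt (1 - 2 * Real.sin β ^ 2) := by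
    rw [mul_pow, hsq2]
  have hE2 : Real.sqrt (1 - Real.tan β ^ 2)
      = Real.sqrt (1 - 2 * Real.sin β ^ 2) / Real.cos β := by
    have hpy := Real.sin_sq_add_cos_sq β
    have h1 : (1:ℝ) - Real.tan β ^ 2 = (1 - 2 * Real.sin β ^ 2) / Real.cos β ^ 2 := by
      rw [Real.tan_eq_sin_div_cos]
      field_simp
      nlinarith
    rw [h1, Real.sqrt_div hD0.le, Real.sqrt_sq hc.le]
  -- derivatives
  have h1 : HasDerivAt (fun b => Real.sqrt 2 * Real.sin b) (Real.sqrt 2 * Real.cos β) β :=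
    (Real.hasDerivAt_sin β).const_mul _
  have harc1 : HasDerivAt Real.arccos
      (-(1 / Real.sqrt (1 - (Real.sqrt 2 * Real.sin β) ^ 2))) (Real.sqrt 2 * Real.sin β) :=
    Real.hasDerivAt_arccos (by nlinarith) (by nlinarith)
  have H1 := harc1.comp β h1
  have htand : HasDerivAt Real.tan (1 / Real.cos β ^ 2) β := Real.hasDerivAt_tan hc.ne'
  have harc2 : HasDerivAt Real.arccos
      (-(1 / Real.sqrt (1 - Real.tan β ^ 2))) (Real.tan β) :=
    Real.hasDerivAt_arccos (by nlinarith) (by nlinarith)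
  have H2 := harc2.comp β htand
  have Hd := (H1.const_mul (2:ℝ)).sub (H2.const_mul (Real.sqrt 2))
  constructor
  · refine Hd.congr_deriv (Eq.symm ?_)
    rw [hE1, hE2]
    have hcc : (1:ℝ) - 2 * Real.cos β ^ 2 = -((1 - 2 * Real.sin β ^ 2)) := by
      nlinarith [Real.sin_sq_add_cos_sq β]
    rw [hcc, ← hDsq]
    set D := Real.sqrt (1 - 2 * Real.sin β ^ 2) with hDdef
    field_simp
    linear_combination (-1 : ℝ) * hDsq
      + (2 : ℝ) * Real.sin_sq_add_cos_sq β
  · apply div_neg_of_neg_of_pos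
    · have hnum : 1 - 2 * Real.cos β ^ 2 < 0 := by nlinarith [hcos_gt, hsq2, hc]
      exact mul_neg_of_pos_of_neg h2 hnum
    · exact mul_pos hc hD
end

section
/- Let a₁ = (1/2, √13/(2√3)) and a₂ = (1/2, −√13/(2√3)) in the Euclidean plane ℝ², let d = 1/(4√3), let L = ℤ·a₁ + ℤ·a₂, let m(w) = inf{‖w − v‖ : v ∈ L}, and let s(L) = inf{‖v‖ : v ∈ L, v ≠ 0}. Then σ := min{ m(a₁/2), m(a₂/2), 4d, √(m((a₁+a₂)/2)² + 4d²), s(L) } satisfies σ = 1/√3 and σ³ = (8/√39)·|det(a₁, a₂)|·d. -/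
open Real

private lemma aux_le_of_sq {a b : ℝ} (ha : 0 ≤ a) (hb : 0 ≤ b) (h : a ^ 2 ≤ b ^ 2) :
    a ≤ b := by
  calc a = Real.sqrt (a ^ 2) := (Real.sqrt_sq ha).symm
    _ ≤ Real.sqrt (b ^ 2) := Real.sqrt_le_sqrt h
    _ = b := Real.sqrt_sq hb

private lemma aux_odd_sq (k : ℤ) : (1 : ℝ) ≤ (1 - 2 * (k : ℝ)) ^ 2 := by
  have h : (1 : ℤ) ≤ (1 - 2 * k) ^ 2 := by
    have h1 : (1 : ℤ) ≤ |1 - 2 * k| := Int.one_le_abs (by omega)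
    nlinarith [sq_abs (1 - 2 * k), abs_nonneg (1 - 2 * k)]
  have h' : ((1 : ℤ) : ℝ) ≤ (((1 - 2 * k) ^ 2 : ℤ) : ℝ) := Int.cast_le.mpr h
  push_cast at h'
  linarith

private lemma aux_ne_sq {k : ℤ} (hk : k ≠ 0) : (1 : ℝ) ≤ (k : ℝ) ^ 2 := by
  have h : (1 : ℤ) ≤ k ^ 2 := by
    have h1 : (1 : ℤ) ≤ |k| := Int.one_le_abs hk
    nlinarith [sq_abs k, abs_nonneg k]
  have h' : ((1 : ℤ) : ℝ) ≤ ((k ^ 2 : ℤ) : ℝ) := Int.cast_le.mpr h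
  push_cast at h'
  linarith

set_option maxHeartbeats 1600000 in
/-- Equality case of the flat systolic estimate `sys³/vol ≤ 8/√39` for type `B₂`:
with `a₁ = (1/2, √13/(2√3))`, `a₂ = (1/2, −√13/(2√3))`, `d = 1/(4√3)`,
`L = ℤa₁ + ℤa₂`, `m(w) = dist(w, L)` and `s(L)` the shortest nonzero lattice
length, the quantity
`σ = min{m(a₁/2), m(a₂/2), 4d, √(m((a₁+a₂)/2)² + 4d²), s(L)}`
equals `1/√3` and satisfies `σ³ = (8/√39)·|det(a₁,a₂)|·d`. -/
theorem stmt19 (a₁ a₂ : EuclideanSpace ℝ (Fin 2)) (d : ℝ)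
    (ha₁ : a₁ = ![1 / 2, Real.sqrt 13 / (2 * Real.sqrt 3)])
    (ha₂ : a₂ = ![1 / 2, -(Real.sqrt 13 / (2 * Real.sqrt 3))])
    (hd : d = 1 / (4 * Real.sqrt 3))
    (m : EuclideanSpace ℝ (Fin 2) → ℝ)
    (hm : ∀ w, m w = sInf {r : ℝ | ∃ p q : ℤ, r = ‖w - (p • a₁ + q • a₂)‖})
    (s : ℝ)
    (hs : s = sInf {r : ℝ | ∃ p q : ℤ,
      p • a₁ + q • a₂ ≠ 0 ∧ r = ‖p • a₁ + q • a₂‖})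
    (σ : ℝ)
    (hσ : σ = min (m ((2:ℝ)⁻¹ • a₁))
      (min (m ((2:ℝ)⁻¹ • a₂))
        (min (4 * d)
          (min (Real.sqrt (m ((2:ℝ)⁻¹ • (a₁ + a₂)) ^ 2 + 4 * d ^ 2)) s)))) :
    σ = 1 / Real.sqrt 3 ∧
      σ ^ 3 = (8 / Real.sqrt 39) * |a₁ 0 * a₂ 1 - a₁ 1 * a₂ 0| * d := by
  have h3 : (0:ℝ) < Real.sqrt 3 := Real.sqrt_pos.mpr (by norm_num)
  have h13 : (0:ℝ) < Real.sqrt 13 := Real.sqrt_pos.mpr (by norm_num)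
  have s3 : Real.sqrt 3 ^ 2 = 3 := Real.sq_sqrt (by norm_num)
  have s13 : Real.sqrt 13 ^ 2 = 13 := Real.sq_sqrt (by norm_num)
  have ht2 : (Real.sqrt 13 / (2 * Real.sqrt 3)) ^ 2 = 13 / 12 := by
    rw [div_pow, mul_pow, s3, s13]; norm_num
  have hc : (1 / Real.sqrt 3) ^ 2 = 1/3 := by
    rw [div_pow, one_pow, s3]
  have hcnn : (0:ℝ) ≤ 1 / Real.sqrt 3 := by positivity
  -- lower bound for m(a₁/2)
  have hm1 : 1 / Real.sqrt 3 ≤ m ((2:ℝ)⁻¹ • a₁) := by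
    rw [hm]
    have hnonempty : Set.Nonempty
        {r : ℝ | ∃ p q : ℤ, r = ‖(2:ℝ)⁻¹ • a₁ - (p • a₁ + q • a₂)‖} :=
      ⟨‖(2:ℝ)⁻¹ • a₁ - ((0:ℤ) • a₁ + (0:ℤ) • a₂)‖, 0, 0, rfl⟩
    apply le_csInf hnonempty
    rintro r ⟨p, q, rfl⟩
    apply aux_le_of_sq hcnn (norm_nonneg _)
    have hn : ‖(2:ℝ)⁻¹ • a₁ - (p • a₁ + q • a₂)‖ ^ 2
        = (1/4 - ((p:ℝ)+q)/2)^2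
          + ((Real.sqrt 13 / (2 * Real.sqrt 3))*(1/2 - ((p:ℝ)-q)))^2 := by
      rw [← WithLp.toLp_ofLp (x := a₁), ← WithLp.toLp_ofLp (x := a₂), ha₁, ha₂]
      simp [EuclideanSpace.norm_eq, Fin.sum_univ_two, Real.norm_eq_abs, sq_abs]
      rw [Real.sq_sqrt (by positivity)]
      ring
    rw [hn, hc, mul_pow, ht2]
    have h1 := aux_odd_sq (p + q)
    have h2 := aux_odd_sq (p - q)
    push_cast at h1 h2
    nlinarith [h1, h2]
  -- lower bound for m(a₂/2)
  have hm2 : 1 / Real.sqrt 3 ≤ m ((2:ℝ)⁻¹ • a₂) := by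
    rw [hm]
    have hnonempty : Set.Nonempty
        {r : ℝ | ∃ p q : ℤ, r = ‖(2:ℝ)⁻¹ • a₂ - (p • a₁ + q • a₂)‖} :=
      ⟨‖(2:ℝ)⁻¹ • a₂ - ((0:ℤ) • a₁ + (0:ℤ) • a₂)‖, 0, 0, rfl⟩
    apply le_csInf hnonempty
    rintro r ⟨p, q, rfl⟩
    apply aux_le_of_sq hcnn (norm_nonneg _)
    have hn : ‖(2:ℝ)⁻¹ • a₂ - (p • a₁ + q • a₂)‖ ^ 2
        = (1/4 - ((p:ℝ)+q)/2)^2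
          + ((Real.sqrt 13 / (2 * Real.sqrt 3))*(1/2 + ((p:ℝ)-q)))^2 := by
      rw [← WithLp.toLp_ofLp (x := a₁), ← WithLp.toLp_ofLp (x := a₂), ha₁, ha₂]
      simp [EuclideanSpace.norm_eq, Fin.sum_univ_two, Real.norm_eq_abs, sq_abs]
      rw [Real.sq_sqrt (by positivity)]
      ring
    rw [hn, hc, mul_pow, ht2]
    have h1 := aux_odd_sq (p + q)
    have h2 := aux_odd_sq (q - p)
    push_cast at h1 h2
    nlinarith [h1, h2]
  -- lower bound for m((a₁+a₂)/2)
  have hm3 : (1:ℝ)/2 ≤ m ((2:ℝ)⁻¹ • (a₁ + a₂)) := by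
    rw [hm]
    have hnonempty : Set.Nonempty
        {r : ℝ | ∃ p q : ℤ, r = ‖(2:ℝ)⁻¹ • (a₁ + a₂) - (p • a₁ + q • a₂)‖} :=
      ⟨‖(2:ℝ)⁻¹ • (a₁ + a₂) - ((0:ℤ) • a₁ + (0:ℤ) • a₂)‖, 0, 0, rfl⟩
    apply le_csInf hnonempty
    rintro r ⟨p, q, rfl⟩
    apply aux_le_of_sq (by norm_num) (norm_nonneg _)
    have hn : ‖(2:ℝ)⁻¹ • (a₁ + a₂) - (p • a₁ + q • a₂)‖ ^ 2
        = (1/2 - ((p:ℝ)+q)/2)^2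
          + ((Real.sqrt 13 / (2 * Real.sqrt 3))*((p:ℝ)-q))^2 := by
      rw [← WithLp.toLp_ofLp (x := a₁), ← WithLp.toLp_ofLp (x := a₂), ha₁, ha₂]
      simp [EuclideanSpace.norm_eq, Fin.sum_univ_two, Real.norm_eq_abs, sq_abs]
      rw [Real.sq_sqrt (by positivity)]
      ring
    rw [hn, mul_pow, ht2]
    by_cases hpq : p = q
    · subst hpq
      have h1 := aux_odd_sq p
      push_cast at h1
      nlinarith [h1]
    · have h2 := aux_ne_sq (k := p - q) (by omega)
      push_cast at h2
      nlinarith [h2, sq_nonneg (1/2 - ((p:ℝ)+q)/2)]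
  -- lower bound for s
  have hsge : 1 / Real.sqrt 3 ≤ s := by
    rw [hs]
    have hw : (1:ℤ) • a₁ + (1:ℤ) • a₂ ≠ 0 := by
      intro h
      have h0 := congrArg (fun v : EuclideanSpace ℝ (Fin 2) => v 0) h
      simp [ha₁, ha₂] at h0
    have hnonempty : Set.Nonempty
        {r : ℝ | ∃ p q : ℤ, p • a₁ + q • a₂ ≠ 0 ∧ r = ‖p • a₁ + q • a₂‖} :=
      ⟨‖(1:ℤ) • a₁ + (1:ℤ) • a₂‖, 1, 1, hw, rfl⟩
    apply le_csInf hnonempty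
    rintro r ⟨p, q, hne, rfl⟩
    apply aux_le_of_sq hcnn (norm_nonneg _)
    have hn : ‖(p:ℤ) • a₁ + q • a₂‖ ^ 2
        = (((p:ℝ)+q)/2)^2
          + ((Real.sqrt 13 / (2 * Real.sqrt 3))*((p:ℝ)-q))^2 := by
      rw [← WithLp.toLp_ofLp (x := a₁), ← WithLp.toLp_ofLp (x := a₂), ha₁, ha₂]
      simp [EuclideanSpace.norm_eq, Fin.sum_univ_two, Real.norm_eq_abs, sq_abs]
      rw [Real.sq_sqrt (by positivity)]
      ring
    rw [hn, hc, mul_pow, ht2]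
    by_cases hpq : p = q
    · subst hpq
      have hp0 : p ≠ 0 := by
        intro h
        subst h
        simp at hne
      have h1 := aux_ne_sq hp0
      push_cast at h1
      nlinarith [h1]
    · have h2 := aux_ne_sq (k := p - q) (by omega)
      push_cast at h2
      nlinarith [h2, sq_nonneg (((p:ℝ)+q)/2)]
  -- 4d = 1/√3
  have h4d : 4 * d = 1 / Real.sqrt 3 := by
    rw [hd]; field_simp
  -- the sqrt term
  have hd2 : d ^ 2 = 1 / 48 := by
    rw [hd, div_pow, one_pow, mul_pow, s3]; norm_num
  have hsqrtge : 1 / Real.sqrt 3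
      ≤ Real.sqrt (m ((2:ℝ)⁻¹ • (a₁ + a₂)) ^ 2 + 4 * d ^ 2) := by
    apply aux_le_of_sq hcnn (Real.sqrt_nonneg _)
    rw [Real.sq_sqrt (by positivity), hc, hd2]
    nlinarith [hm3]
  -- σ = 1/√3
  have hσval : σ = 1 / Real.sqrt 3 := by
    have hle : σ ≤ 1 / Real.sqrt 3 := by
      rw [hσ, ← h4d]
      exact le_trans (min_le_right _ _) (le_trans (min_le_right _ _) (min_le_left _ _))
    have hge : 1 / Real.sqrt 3 ≤ σ := by
      rw [hσ]
      exact le_min hm1 (le_min hm2 (le_min (le_of_eq h4d.symm)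
        (le_min hsqrtge hsge)))
    linarith
  refine ⟨hσval, ?_⟩
  rw [hσval]
  have e10 : a₁ 0 = 1 / 2 := by rw [ha₁]; rfl
  have e11 : a₁ 1 = Real.sqrt 13 / (2 * Real.sqrt 3) := by rw [ha₁]; rfl
  have e20 : a₂ 0 = 1 / 2 := by rw [ha₂]; rfl
  have e21 : a₂ 1 = -(Real.sqrt 13 / (2 * Real.sqrt 3)) := by rw [ha₂]; rfl
  rw [e10, e11, e20, e21, hd]
  have habs : |1 / 2 * -(Real.sqrt 13 / (2 * Real.sqrt 3))
      - Real.sqrt 13 / (2 * Real.sqrt 3) * (1 / 2)|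
      = Real.sqrt 13 / (2 * Real.sqrt 3) := by
    rw [show (1:ℝ) / 2 * -(Real.sqrt 13 / (2 * Real.sqrt 3))
        - Real.sqrt 13 / (2 * Real.sqrt 3) * (1 / 2)
        = -(Real.sqrt 13 / (2 * Real.sqrt 3)) by ring]
    rw [abs_neg, abs_of_nonneg (by positivity)]
  rw [habs]
  have h39 : Real.sqrt 39 = Real.sqrt 3 * Real.sqrt 13 := by
    rw [← Real.sqrt_mul (by norm_num : (0:ℝ) ≤ 3)]
    norm_num
  rw [h39]
  field_simp
  ring
end
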